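/- arXiv:2103.05896 — 4 statements merged into one kernel-verified Lean document; each statement's English description precedes it below -/
import Mathlib

section
/- Let x_1, ..., x_B ∈ R^d satisfy ‖x_i‖^2 ≤ R for all i, and suppose 2γBR < 1/2 (i.e., γRB < 1/4). Then the sum over all k ≥ 2 and all tuples (i_1,...,i_k) ∈ {1,...,B}^k of (2γ)^k x_{i_1}x_{i_1}^T ⋯ x_{i_k}x_{i_k}^T is PSD-dominated by 2γ · (4γBR/(1 − 4γBR)) · Σ_{i=1}^B x_i x_i^T. -/
open Matrix

section auxlemmas
variable {d B : ℕ} {R : ℝ}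

private lemma vmv_mulVec (w u v : Fin d → ℝ) : vecMulVec w u *ᵥ v = (u ⬝ᵥ v) • w := by
  ext a
  simp only [mulVec, dotProduct, vecMulVec_apply, Pi.smul_apply, smul_eq_mul, Finset.sum_mul]
  exact Finset.sum_congr rfl fun b _ => by ring

private lemma vmv_transpose (w u : Fin d → ℝ) : (vecMulVec w u)ᵀ = vecMulVec u w := by
  ext a b; simp [vecMulVec_apply, mul_comm]

private lemma abs_dot_le (hR : 0 ≤ R) {u w : Fin d → ℝ} (hu : u ⬝ᵥ u ≤ R) (hw : w ⬝ᵥ w ≤ R) :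
    |u ⬝ᵥ w| ≤ R := by
  have h := Finset.sum_mul_sq_le_sq_mul_sq Finset.univ u w
  have e1 : ∑ i, u i ^ 2 = u ⬝ᵥ u := by simp [dotProduct, sq]
  have e2 : ∑ i, w i ^ 2 = w ⬝ᵥ w := by simp [dotProduct, sq]
  have h1 : (u ⬝ᵥ w) ^ 2 ≤ R * R := by
    calc (u ⬝ᵥ w) ^ 2 ≤ (u ⬝ᵥ u) * (w ⬝ᵥ w) := by rw [← e1, ← e2]; exact h
    _ ≤ R * R := mul_le_mul hu hw (Finset.sum_nonneg fun i _ => mul_self_nonneg _) hR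
  nlinarith [abs_nonneg (u ⬝ᵥ w), sq_abs (u ⬝ᵥ w)]

private lemma abs_entry_le (hR : 0 ≤ R) {u : Fin d → ℝ} (hu : u ⬝ᵥ u ≤ R) (a : Fin d) :
    |u a| ≤ Real.sqrt R := by
  apply Real.abs_le_sqrt
  calc u a ^ 2 ≤ ∑ i, u i ^ 2 :=
        Finset.single_le_sum (fun i _ => sq_nonneg (u i)) (Finset.mem_univ a)
    _ ≤ R := by rw [show (∑ i, u i ^ 2) = u ⬝ᵥ u from by simp [dotProduct, sq]]; exact hu

private lemma chain (hR : 0 ≤ R) (x : Fin B → Fin d → ℝ) (hx : ∀ i, x i ⬝ᵥ x i ≤ R)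
    (v : Fin d → ℝ) (l : List (Fin B)) (i : Fin B) : ∃ c : ℝ,
      (((i :: l).map fun j => vecMulVec (x j) (x j)).prod) *ᵥ v = c • x i ∧
      |c| ≤ R ^ l.length * |x (l.getLastD i) ⬝ᵥ v| := by
  induction l generalizing i with
  | nil =>
    refine ⟨x i ⬝ᵥ v, ?_, ?_⟩
    · simp [vmv_mulVec]
    · simp [List.getLastD]
  | cons j t IH =>
    obtain ⟨c, hc, hb⟩ := IH j
    refine ⟨c * (x i ⬝ᵥ x j), ?_, ?_⟩
    · rw [List.map_cons, List.prod_cons, ← mulVec_mulVec, hc, mulVec_smul, vmv_mulVec]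
      ext a
      simp only [Pi.smul_apply, smul_eq_mul]
      ring
    · rw [List.getLastD_cons]
      calc |c * (x i ⬝ᵥ x j)| = |c| * |x i ⬝ᵥ x j| := abs_mul _ _
        _ ≤ (R ^ t.length * |x (t.getLastD j) ⬝ᵥ v|) * R :=
            mul_le_mul hb (abs_dot_le hR (hx i) (hx j)) (abs_nonneg _) (by positivity)
        _ = R ^ (j :: t).length * |x (t.getLastD j) ⬝ᵥ v| := by
            rw [List.length_cons]; ring

private lemma getLastD_ofFn_succ' {α : Type*} {n : ℕ} (f : Fin (n + 1) → α) :
    (List.ofFn fun j : Fin n => f j.succ).getLastD (f 0) = f (Fin.last n) := by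
  have h2 := List.getLast_ofFn_succ f
  have h1 : List.ofFn f = f 0 :: List.ofFn fun j : Fin n => f j.succ := List.ofFn_succ (f := f)
  simp only [h1] at h2
  rwa [List.getLast_eq_getLastD] at h2

private lemma chain_ofFn (hR : 0 ≤ R) (x : Fin B → Fin d → ℝ) (hx : ∀ i, x i ⬝ᵥ x i ≤ R)
    (v : Fin d → ℝ) {n : ℕ} (idx : Fin (n + 1) → Fin B) : ∃ c : ℝ,
      (List.ofFn fun j => vecMulVec (x (idx j)) (x (idx j))).prod *ᵥ v = c • x (idx 0) ∧
      |c| ≤ R ^ n * |x (idx (Fin.last n)) ⬝ᵥ v| := by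
  obtain ⟨c, hc, hb⟩ := chain hR x hx v (List.ofFn fun j : Fin n => idx j.succ) (idx 0)
  refine ⟨c, ?_, ?_⟩
  · rw [← hc]
    rw [show ((idx 0) :: List.ofFn fun j : Fin n => idx j.succ) = List.ofFn idx from
      (List.ofFn_succ (f := idx)).symm, List.map_ofFn]
    rfl
  · rwa [List.length_ofFn, getLastD_ofFn_succ' idx] at hb

private lemma count_sum {B n : ℕ} (j0 : Fin (n + 1)) (h : Fin B → ℝ) :
    ∑ idx : Fin (n + 1) → Fin B, h (idx j0) = (B : ℝ) ^ n * ∑ i, h i := by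
  classical
  have hcard : Fintype.card ({ j : Fin (n + 1) // j ≠ j0 } → Fin B) = B ^ n := by
    rw [Fintype.card_fun, Fintype.card_fin]
    congr 1
    simp [Fintype.card_subtype_compl]
  calc ∑ idx : Fin (n + 1) → Fin B, h (idx j0)
      = ∑ p : Fin B × ({ j : Fin (n + 1) // j ≠ j0 } → Fin B), h p.1 :=
        Fintype.sum_equiv (Equiv.funSplitAt j0 (Fin B)) _ _ (fun idx => rfl)
    _ = ∑ i : Fin B, ∑ _g : { j : Fin (n + 1) // j ≠ j0 } → Fin B, h i :=
        Fintype.sum_prod_type (f := fun p => h p.1)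
    _ = (B : ℝ) ^ n * ∑ i, h i := by
        simp only [Finset.sum_const, Finset.card_univ, hcard, nsmul_eq_mul, Nat.cast_pow]
        rw [Finset.mul_sum]

private lemma ofFn_reverse {α : Type*} {n : ℕ} (g : Fin n → α) :
    (List.ofFn g).reverse = List.ofFn fun j => g j.rev := by
  apply List.ext_getElem
  · simp
  · intro i h1 h2
    simp only [List.getElem_reverse, List.getElem_ofFn, List.length_ofFn, List.length_reverse] at *
    congr 1
    ext
    simp only [Fin.val_rev]
    omega

end auxlemmas

set_option maxHeartbeats 1000000 in
/-- For vectors `x₁,…,x_B` with `‖xᵢ‖² ≤ R` and `2γBR < 1/2`, the sum over all `k ≥ 2` and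
tuples `(i₁,…,i_k)` of `(2γ)^k x_{i₁}x_{i₁}ᵀ⋯x_{i_k}x_{i_k}ᵀ` is PSD-dominated by
`2γ · (4γBR/(1 − 4γBR)) · Σᵢ xᵢxᵢᵀ`. -/
theorem stmt_3 {d B : ℕ} (R γ : ℝ) (hγ : 0 < γ) (hR : 0 ≤ R)
    (x : Fin B → (Fin d → ℝ)) (hx : ∀ i, x i ⬝ᵥ x i ≤ R)
    (hsize : 2 * γ * B * R < 1 / 2) :
    (((2 * γ * (4 * γ * B * R / (1 - 4 * γ * B * R))) •
        ∑ i, vecMulVec (x i) (x i)) -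
      ∑' k : ℕ, ∑ idx : Fin (k + 2) → Fin B,
        (2 * γ) ^ (k + 2) •
          (List.ofFn fun j : Fin (k + 2) =>
            vecMulVec (x (idx j)) (x (idx j))).prod).PosSemidef := by
  classical
  have hq0 : (0:ℝ) ≤ 2 * γ * B * R := by positivity
  set q : ℝ := 2 * γ * (B : ℝ) * R with hqdef
  have hq1 : q < 1 / 2 := hsize
  have hγ2 : (0:ℝ) < 2 * γ := by linarith
  set f : ℕ → Matrix (Fin d) (Fin d) ℝ := fun k => ∑ idx : Fin (k + 2) → Fin B,
      (2 * γ) ^ (k + 2) •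
        (List.ofFn fun j : Fin (k + 2) => vecMulVec (x (idx j)) (x (idx j))).prod
    with hfdef
  -- entry bound for products
  have hprodentry : ∀ (k : ℕ) (idx : Fin (k + 2) → Fin B) (a b : Fin d),
      |(List.ofFn fun j : Fin (k + 2) => vecMulVec (x (idx j)) (x (idx j))).prod a b|
        ≤ R ^ (k + 2) := by
    intro k idx a b
    obtain ⟨c, hc, hb⟩ := chain_ofFn hR x hx (Pi.single b (1:ℝ)) (n := k + 1) idx
    rw [mulVec_single] at hc
    have hab := congrFun hc a
    simp only [mul_one, Pi.smul_apply, smul_eq_mul, MulOpposite.op_one, one_smul, col_apply] at hab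
    rw [hab, abs_mul]
    have h1 : |c| ≤ R ^ (k + 1) * Real.sqrt R := by
      refine hb.trans ?_
      have h2 : |x (idx (Fin.last (k + 1))) ⬝ᵥ Pi.single b (1:ℝ)| ≤ Real.sqrt R := by
        rw [dotProduct_single, mul_one]
        exact abs_entry_le hR (hx _) b
      exact mul_le_mul_of_nonneg_left h2 (by positivity)
    have h2 : |x (idx 0) a| ≤ Real.sqrt R := abs_entry_le hR (hx _) a
    calc |c| * |x (idx 0) a| ≤ (R ^ (k + 1) * Real.sqrt R) * Real.sqrt R :=
        mul_le_mul h1 h2 (abs_nonneg _) (by positivity)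
      _ = R ^ (k + 2) := by rw [mul_assoc, Real.mul_self_sqrt hR]; ring
  -- summability
  have hsum_geom : Summable (fun k : ℕ => q ^ (k + 2)) :=
    ((summable_geometric_of_lt_one hq0 (by linarith)).mul_left (q ^ 2)).congr fun k => by ring
  have hfabs : ∀ (k : ℕ) (a b : Fin d), |f k a b| ≤ q ^ (k + 2) := by
    intro k a b
    have hfk : f k a b = ∑ idx : Fin (k + 2) → Fin B, (2 * γ) ^ (k + 2) *
        ((List.ofFn fun j : Fin (k + 2) => vecMulVec (x (idx j)) (x (idx j))).prod a b) := by
      rw [hfdef]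
      simp [Matrix.sum_apply]
    rw [hfk]
    calc |∑ idx : Fin (k + 2) → Fin B, (2 * γ) ^ (k + 2) *
            ((List.ofFn fun j : Fin (k + 2) => vecMulVec (x (idx j)) (x (idx j))).prod a b)|
        ≤ ∑ idx : Fin (k + 2) → Fin B, |(2 * γ) ^ (k + 2) *
            ((List.ofFn fun j : Fin (k + 2) => vecMulVec (x (idx j)) (x (idx j))).prod a b)| :=
          Finset.abs_sum_le_sum_abs _ _
      _ ≤ ∑ _idx : Fin (k + 2) → Fin B, (2 * γ) ^ (k + 2) * R ^ (k + 2) :=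
          Finset.sum_le_sum fun idx _ => by
            rw [abs_mul, abs_of_pos (pow_pos hγ2 _)]
            exact mul_le_mul_of_nonneg_left (hprodentry k idx a b) (by positivity)
      _ = q ^ (k + 2) := by
          rw [Finset.sum_const, Finset.card_univ, Fintype.card_fun, Fintype.card_fin,
            Fintype.card_fin, nsmul_eq_mul, Nat.cast_pow, hqdef]
          ring
  have hsf : Summable f := by
    apply Pi.summable.mpr; intro a; apply Pi.summable.mpr; intro b
    exact Summable.of_abs
      (Summable.of_nonneg_of_le (fun k => abs_nonneg _) (fun k => hfabs k a b) hsum_geom)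
  -- main quadratic-form inequality
  have hmain : ∀ v : Fin d → ℝ, 0 ≤ v ⬝ᵥ
      (((2 * γ * (4 * γ * (B : ℝ) * R / (1 - 4 * γ * (B : ℝ) * R))) •
        (∑ i, vecMulVec (x i) (x i)) - ∑' k, f k) *ᵥ v) := by
    intro v
    set φL : Matrix (Fin d) (Fin d) ℝ →ₗ[ℝ] ℝ :=
      { toFun := fun M => v ⬝ᵥ M *ᵥ v
        map_add' := fun M N => by
          rw [add_mulVec, dotProduct_add]
        map_smul' := fun c M => by
          dsimp only [RingHom.id_apply]
          rw [smul_mulVec, dotProduct_smul, smul_eq_mul] } with hφL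
    set φ := LinearMap.toContinuousLinearMap φL with hφ
    have hφapp : ∀ M, φ M = v ⬝ᵥ M *ᵥ v := fun M => rfl
    set Q : ℝ := ∑ i, (x i ⬝ᵥ v) ^ 2 with hQ
    have hQ0 : 0 ≤ Q := Finset.sum_nonneg fun i _ => sq_nonneg _
    have hφP : ∀ i : Fin B, φ (vecMulVec (x i) (x i)) = (x i ⬝ᵥ v) ^ 2 := by
      intro i
      rw [hφapp, vmv_mulVec, dotProduct_smul, smul_eq_mul, dotProduct_comm, sq]
    have hgb : ∀ k : ℕ, |φ (f k)| ≤ 2 * γ * Q * q * q ^ k := by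
      intro k
      have hterm : ∀ idx : Fin (k + 2) → Fin B,
          |φ ((List.ofFn fun j : Fin (k + 2) => vecMulVec (x (idx j)) (x (idx j))).prod)|
            ≤ R ^ (k + 1) *
              (((x (idx 0) ⬝ᵥ v) ^ 2 + (x (idx (Fin.last (k + 1))) ⬝ᵥ v) ^ 2) / 2) := by
        intro idx
        obtain ⟨c, hc, hb⟩ := chain_ofFn hR x hx v (n := k + 1) idx
        rw [hφapp, hc, dotProduct_smul, smul_eq_mul, abs_mul]
        have h2 : |v ⬝ᵥ x (idx 0)| = |x (idx 0) ⬝ᵥ v| := by rw [dotProduct_comm]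
        calc |c| * |v ⬝ᵥ x (idx 0)|
            ≤ (R ^ (k + 1) * |x (idx (Fin.last (k + 1))) ⬝ᵥ v|) * |x (idx 0) ⬝ᵥ v| := by
              rw [h2]; exact mul_le_mul_of_nonneg_right hb (abs_nonneg _)
          _ ≤ R ^ (k + 1) *
              (((x (idx 0) ⬝ᵥ v) ^ 2 + (x (idx (Fin.last (k + 1))) ⬝ᵥ v) ^ 2) / 2) := by
              rw [mul_assoc]
              refine mul_le_mul_of_nonneg_left ?_ (by positivity)
              nlinarith [sq_abs (x (idx 0) ⬝ᵥ v), sq_abs (x (idx (Fin.last (k + 1))) ⬝ᵥ v),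
                sq_nonneg (|x (idx (Fin.last (k + 1))) ⬝ᵥ v| - |x (idx 0) ⬝ᵥ v|),
                abs_nonneg (x (idx 0) ⬝ᵥ v), abs_nonneg (x (idx (Fin.last (k + 1))) ⬝ᵥ v)]
      have hsum0 : ∑ idx : Fin (k + 2) → Fin B, (x (idx 0) ⬝ᵥ v) ^ 2 = (B : ℝ) ^ (k + 1) * Q :=
        count_sum (0 : Fin (k + 2)) (fun i => (x i ⬝ᵥ v) ^ 2)
      have hsuml : ∑ idx : Fin (k + 2) → Fin B, (x (idx (Fin.last (k + 1))) ⬝ᵥ v) ^ 2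
          = (B : ℝ) ^ (k + 1) * Q :=
        count_sum (Fin.last (k + 1)) (fun i => (x i ⬝ᵥ v) ^ 2)
      have hfk : φ (f k) = ∑ idx : Fin (k + 2) → Fin B, (2 * γ) ^ (k + 2) *
          φ ((List.ofFn fun j : Fin (k + 2) => vecMulVec (x (idx j)) (x (idx j))).prod) := by
        rw [hfdef]
        simp [map_sum, _root_.map_smul, smul_eq_mul]
      rw [hfk]
      calc |∑ idx : Fin (k + 2) → Fin B, (2 * γ) ^ (k + 2) *
              φ ((List.ofFn fun j : Fin (k + 2) => vecMulVec (x (idx j)) (x (idx j))).prod)|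
          ≤ ∑ idx : Fin (k + 2) → Fin B, |(2 * γ) ^ (k + 2) *
              φ ((List.ofFn fun j : Fin (k + 2) => vecMulVec (x (idx j)) (x (idx j))).prod)| :=
            Finset.abs_sum_le_sum_abs _ _
        _ ≤ ∑ idx : Fin (k + 2) → Fin B, ((2 * γ) ^ (k + 2) * R ^ (k + 1) / 2) *
              ((x (idx 0) ⬝ᵥ v) ^ 2 + (x (idx (Fin.last (k + 1))) ⬝ᵥ v) ^ 2) :=
            Finset.sum_le_sum fun idx _ => by
              rw [abs_mul, abs_of_pos (pow_pos hγ2 _)]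
              refine le_trans
                (mul_le_mul_of_nonneg_left (hterm idx) (by positivity)) (le_of_eq ?_)
              ring
        _ = ((2 * γ) ^ (k + 2) * R ^ (k + 1) / 2) *
              (((B : ℝ) ^ (k + 1) * Q) + ((B : ℝ) ^ (k + 1) * Q)) := by
            rw [← Finset.mul_sum, Finset.sum_add_distrib, hsum0, hsuml]
        _ = 2 * γ * Q * q * q ^ k := by rw [hqdef]; ring
    have hgsum : Summable fun k => φ (f k) := hsf.map φ φ.continuous
    have hbsum : Summable fun k : ℕ => 2 * γ * Q * q * q ^ k :=
      (summable_geometric_of_lt_one hq0 (by linarith)).mul_left _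
    have htle : ∑' k, φ (f k) ≤ ∑' k : ℕ, 2 * γ * Q * q * q ^ k :=
      Summable.tsum_le_tsum (fun k => (le_abs_self _).trans (hgb k)) hgsum hbsum
    have htsumb : ∑' k : ℕ, 2 * γ * Q * q * q ^ k = 2 * γ * Q * q * (1 - q)⁻¹ := by
      rw [tsum_mul_left, tsum_geometric_of_lt_one hq0 (by linarith)]
    have h1q : (0:ℝ) < 1 - q := by linarith
    have h12q : (0:ℝ) < 1 - 2 * q := by linarith
    have harith : 2 * γ * Q * q * (1 - q)⁻¹
        ≤ 2 * γ * (4 * γ * (B : ℝ) * R / (1 - 4 * γ * (B : ℝ) * R)) * Q := by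
      have h4 : 4 * γ * (B : ℝ) * R = 2 * q := by rw [hqdef]; ring
      rw [h4]
      have hfrac : q * (1 - q)⁻¹ ≤ 2 * q / (1 - 2 * q) := by
        rw [← div_eq_mul_inv, div_le_div_iff₀ h1q h12q]
        nlinarith
      calc 2 * γ * Q * q * (1 - q)⁻¹ = (2 * γ * Q) * (q * (1 - q)⁻¹) := by ring
        _ ≤ (2 * γ * Q) * (2 * q / (1 - 2 * q)) :=
            mul_le_mul_of_nonneg_left hfrac (by positivity)
        _ = 2 * γ * (2 * q / (1 - 2 * q)) * Q := by ring
    have hφT : φ (∑' k, f k) = ∑' k, φ (f k) := φ.map_tsum hsf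
    have hexpand : v ⬝ᵥ
        (((2 * γ * (4 * γ * (B : ℝ) * R / (1 - 4 * γ * (B : ℝ) * R))) •
          (∑ i, vecMulVec (x i) (x i)) - ∑' k, f k) *ᵥ v)
        = (2 * γ * (4 * γ * (B : ℝ) * R / (1 - 4 * γ * (B : ℝ) * R))) * Q - φ (∑' k, f k) := by
      rw [sub_mulVec, dotProduct_sub]
      congr 1
      rw [smul_mulVec, dotProduct_smul, smul_eq_mul]
      congr 1
      rw [show v ⬝ᵥ (∑ i, vecMulVec (x i) (x i)) *ᵥ v
          = φ (∑ i, vecMulVec (x i) (x i)) from rfl, map_sum]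
      exact Finset.sum_congr rfl fun i _ => hφP i
    rw [hexpand, hφT]
    rw [htsumb] at htle
    linarith
  -- symmetry of each f k
  have hfsymm : ∀ k, (f k)ᵀ = f k := by
    intro k
    have hbij : Function.Bijective
        (fun (idx : Fin (k + 2) → Fin B) => fun j : Fin (k + 2) => idx j.rev) :=
      Function.Involutive.bijective fun idx => funext fun j => by
        show idx j.rev.rev = idx j
        rw [Fin.rev_rev]
    rw [hfdef]
    simp only []
    rw [transpose_sum]
    calc ∑ idx : Fin (k + 2) → Fin B, ((2 * γ) ^ (k + 2) •
            (List.ofFn fun j : Fin (k + 2) => vecMulVec (x (idx j)) (x (idx j))).prod)ᵀ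
        = ∑ idx : Fin (k + 2) → Fin B, (2 * γ) ^ (k + 2) •
            (List.ofFn fun j : Fin (k + 2) =>
              vecMulVec (x (idx j.rev)) (x (idx j.rev))).prod := by
          refine Finset.sum_congr rfl fun idx _ => ?_
          rw [transpose_smul, transpose_list_prod, List.map_ofFn]
          rw [show (Matrix.transpose ∘ fun j : Fin (k + 2) =>
              vecMulVec (x (idx j)) (x (idx j))) = fun j : Fin (k + 2) =>
              vecMulVec (x (idx j)) (x (idx j)) from funext fun j => vmv_transpose _ _]
          rw [ofFn_reverse]
      _ = ∑ idx : Fin (k + 2) → Fin B, (2 * γ) ^ (k + 2) •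
            (List.ofFn fun j : Fin (k + 2) => vecMulVec (x (idx j)) (x (idx j))).prod :=
          Fintype.sum_bijective _ hbij _ _ fun idx => rfl
  refine posSemidef_iff_dotProduct_mulVec.mpr ⟨?_, ?_⟩
  · -- Hermitian
    show _ᴴ = _
    rw [conjTranspose_eq_transpose_of_trivial, transpose_sub, transpose_smul, transpose_sum]
    have hS : ∑ i, (vecMulVec (x i) (x i))ᵀ = ∑ i, vecMulVec (x i) (x i) :=
      Finset.sum_congr rfl fun i _ => vmv_transpose _ _
    have hT : (∑' k, f k)ᵀ = ∑' k, f k := by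
      set ψ : Matrix (Fin d) (Fin d) ℝ →L[ℝ] Matrix (Fin d) (Fin d) ℝ :=
        LinearMap.toContinuousLinearMap
          ((Matrix.transposeLinearEquiv (Fin d) (Fin d) ℝ ℝ).toLinearMap) with hψ
      have hψapp : ∀ M : Matrix (Fin d) (Fin d) ℝ, ψ M = Mᵀ := fun M => rfl
      calc (∑' k, f k)ᵀ = ψ (∑' k, f k) := (hψapp _).symm
        _ = ∑' k, ψ (f k) := ψ.map_tsum hsf
        _ = ∑' k, f k := by
            congr 1
            funext k
            rw [hψapp, hfsymm]
    rw [hS, hT]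
  · intro v
    have h := hmain v
    simpa using h
end

section
/- Let x_0, ..., x_{B-1} ∈ R^d with ‖x_j‖^2 ≤ R for all j and suppose γRB < 1/6. Define H = ∏_{j=0}^{B-1}(I − 2γ x_j x_j^T) (product taken in order). Then I − 4γ(1 + 2γBR/(1−4γBR)) Σ_{j=0}^{B-1} x_j x_j^T ⪯ H^T H ⪯ I − 4γ(1 − 2γBR/(1−4γBR)) Σ_{j=0}^{B-1} x_j x_j^T. -/
open Matrix Finset

namespace Stmt4Aux

variable {d : ℕ}

abbrev Mat (d : ℕ) := Matrix (Fin d) (Fin d) ℝ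

noncomputable def Am (y : Fin d → ℝ) : Mat d := vecMulVec y y

lemma Am_transpose (y : Fin d → ℝ) : (Am y)ᵀ = Am y := by
  ext i j; simp [Am, vecMulVec_apply, mul_comm]

lemma posSemidef_of (X : Mat d) (h1 : Xᵀ = X) (h2 : ∀ v, 0 ≤ v ⬝ᵥ (X *ᵥ v)) :
    X.PosSemidef := by
  refine Matrix.PosSemidef.of_dotProduct_mulVec_nonneg ?_ fun v => ?_
  · rw [Matrix.IsHermitian, conjTranspose_eq_transpose_of_trivial, h1]
  · simpa using h2 v

lemma vecMulVec_mulVec' (a c v : Fin d → ℝ) :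
    vecMulVec a c *ᵥ v = (c ⬝ᵥ v) • a := by
  ext i
  simp only [Matrix.mulVec, vecMulVec_apply, dotProduct, Pi.smul_apply, smul_eq_mul,
    Finset.mul_sum, Finset.sum_mul]
  apply Finset.sum_congr rfl
  intro k _; ring

lemma form_vmv (a c v : Fin d → ℝ) : v ⬝ᵥ (vecMulVec a c *ᵥ v) = (a ⬝ᵥ v) * (c ⬝ᵥ v) := by
  rw [vecMulVec_mulVec', dotProduct_smul, smul_eq_mul, dotProduct_comm v a]
  ring

lemma form_Am (y v : Fin d → ℝ) : v ⬝ᵥ (Am y *ᵥ v) = (y ⬝ᵥ v) * (y ⬝ᵥ v) :=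
  form_vmv y y v

lemma Am_psd (y : Fin d → ℝ) : (Am y).PosSemidef := by
  refine posSemidef_of _ (Am_transpose y) fun v => ?_
  rw [form_Am]; exact mul_self_nonneg _

lemma vecMulVec_mul_vecMulVec (a b c e : Fin d → ℝ) :
    vecMulVec a b * vecMulVec c e = (b ⬝ᵥ c) • vecMulVec a e := by
  ext i j
  simp only [Matrix.mul_apply, vecMulVec_apply, Matrix.smul_apply, smul_eq_mul, dotProduct,
    Finset.sum_mul, Finset.mul_sum]
  apply Finset.sum_congr rfl
  intro k _; ring

lemma Am_mul_Am (a c : Fin d → ℝ) : Am a * Am c = (a ⬝ᵥ c) • vecMulVec a c :=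
  vecMulVec_mul_vecMulVec a a c c

lemma dot_self_nonneg (a : Fin d → ℝ) : 0 ≤ a ⬝ᵥ a :=
  Finset.sum_nonneg fun i _ => mul_self_nonneg _

lemma dot_sq_le (a c : Fin d → ℝ) : (a ⬝ᵥ c)^2 ≤ (a ⬝ᵥ a) * (c ⬝ᵥ c) := by
  simpa [dotProduct, pow_two] using Finset.sum_mul_sq_le_sq_mul_sq Finset.univ a c

lemma dot_sq_le_R {R : ℝ} (hR : 0 ≤ R) (a c : Fin d → ℝ) (ha : a ⬝ᵥ a ≤ R)
    (hc : c ⬝ᵥ c ≤ R) : (a ⬝ᵥ c)^2 ≤ R^2 := by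
  calc (a ⬝ᵥ c)^2 ≤ (a ⬝ᵥ a) * (c ⬝ᵥ c) := dot_sq_le a c
  _ ≤ R^2 := by
    have := dot_self_nonneg a; have := dot_self_nonneg c
    nlinarith

lemma scalar_cross {R w p q : ℝ} (hR : 0 ≤ R) (hw : w^2 ≤ R^2) :
    w*(p*q) + w*(q*p) ≤ R*(p*p+q*q) := by
  rcases hR.eq_or_lt with h0|hpos
  · have hw0 : w = 0 := by nlinarith [sq_nonneg w]
    rw [hw0, ← h0]; nlinarith [sq_nonneg (p-q)]
  · have key : 0 ≤ (w*p - R*q)^2 + (R^2 - w^2)*p^2 :=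
      add_nonneg (sq_nonneg _) (mul_nonneg (by linarith) (sq_nonneg p))
    nlinarith [key, hpos]

lemma psd_sum {s : Finset ℕ} {f : ℕ → Mat d} (h : ∀ p ∈ s, (f p).PosSemidef) :
    (∑ p ∈ s, f p).PosSemidef := by
  classical
  induction s using Finset.induction_on with
  | empty => simpa using Matrix.PosSemidef.zero
  | insert a s hnot ih =>
    rw [Finset.sum_insert hnot]
    exact (h a (Finset.mem_insert_self a s)).add
      (ih fun p hp => h p (Finset.mem_insert_of_mem hp))

lemma psd_smul {X : Mat d} (h : X.PosSemidef) {c : ℝ} (hc : 0 ≤ c) :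
    (c • X).PosSemidef := by
  refine Matrix.PosSemidef.of_dotProduct_mulVec_nonneg ?_ fun v => ?_
  · rw [Matrix.IsHermitian, conjTranspose_smul]
    simpa using congrArg (c • ·) h.1
  · rw [smul_mulVec, dotProduct_smul]
    exact mul_nonneg hc (h.dotProduct_mulVec_nonneg v)

lemma Am_mul_Am_mul (y c : Fin d → ℝ) :
    Am y * (Am c * Am y) = ((y ⬝ᵥ c)^2) • Am y := by
  rw [Am_mul_Am c y, mul_smul_comm, show Am y * vecMulVec c y = vecMulVec y y * vecMulVec c y from rfl,
    vecMulVec_mul_vecMulVec, smul_smul, dotProduct_comm c y, ← sq]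
  rfl

lemma cross_add_psd {R : ℝ} (hR : 0 ≤ R) (a c : Fin d → ℝ) (ha : a ⬝ᵥ a ≤ R)
    (hc : c ⬝ᵥ c ≤ R) :
    (R • (Am a + Am c) + (Am a * Am c + Am c * Am a)).PosSemidef := by
  have hw : (a ⬝ᵥ c)^2 ≤ R^2 := dot_sq_le_R hR a c ha hc
  refine posSemidef_of _ ?_ fun v => ?_
  · simp only [transpose_add, transpose_smul, transpose_mul, Am_transpose]
    abel
  · rw [Am_mul_Am a c, Am_mul_Am c a, dotProduct_comm c a]
    simp only [add_mulVec, smul_mulVec, dotProduct_add, dotProduct_smul, smul_eq_mul,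
      form_Am, form_vmv]
    have := scalar_cross (w := -(a ⬝ᵥ c)) (p := a ⬝ᵥ v) (q := c ⬝ᵥ v) hR (by simpa using hw)
    nlinarith [this]

lemma cross_sub_psd {R : ℝ} (hR : 0 ≤ R) (a c : Fin d → ℝ) (ha : a ⬝ᵥ a ≤ R)
    (hc : c ⬝ᵥ c ≤ R) :
    (R • (Am a + Am c) - (Am a * Am c + Am c * Am a)).PosSemidef := by
  have hw : (a ⬝ᵥ c)^2 ≤ R^2 := dot_sq_le_R hR a c ha hc
  refine posSemidef_of _ ?_ fun v => ?_
  · simp only [transpose_sub, transpose_add, transpose_smul, transpose_mul, Am_transpose]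
    abel
  · rw [Am_mul_Am a c, Am_mul_Am c a, dotProduct_comm c a]
    simp only [sub_mulVec, add_mulVec, smul_mulVec, dotProduct_sub, dotProduct_add,
      dotProduct_smul, smul_eq_mul, form_Am, form_vmv]
    have := scalar_cross (w := a ⬝ᵥ c) (p := a ⬝ᵥ v) (q := c ⬝ᵥ v) hR hw
    nlinarith [this]

lemma aka_sub_psd {R : ℝ} (hR : 0 ≤ R) (y c : Fin d → ℝ) (hy : y ⬝ᵥ y ≤ R)
    (hc : c ⬝ᵥ c ≤ R) :
    ((R^2) • Am y - Am y * (Am c * Am y)).PosSemidef := by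
  rw [Am_mul_Am_mul, ← sub_smul]
  exact psd_smul (Am_psd y) (by linarith [dot_sq_le_R hR y c hy hc])

lemma aka_psd (y c : Fin d → ℝ) : (Am y * (Am c * Am y)).PosSemidef := by
  rw [Am_mul_Am_mul]
  exact psd_smul (Am_psd y) (sq_nonneg _)


lemma sum_cross_add_psd {R : ℝ} (hR : 0 ≤ R) {n : ℕ} (w : ℕ → ℝ) (z : ℕ → Fin d → ℝ)
    (y : Fin d → ℝ) (hw : ∀ p ∈ Finset.range n, 0 ≤ w p) (hz : ∀ p, z p ⬝ᵥ z p ≤ R)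
    (hy : y ⬝ᵥ y ≤ R) :
    (R • ((∑ p ∈ Finset.range n, w p) • Am y + ∑ p ∈ Finset.range n, w p • Am (z p))
      + (Am y * ∑ p ∈ Finset.range n, w p • Am (z p)
         + (∑ p ∈ Finset.range n, w p • Am (z p)) * Am y)).PosSemidef := by
  have heq : R • ((∑ p ∈ Finset.range n, w p) • Am y + ∑ p ∈ Finset.range n, w p • Am (z p))
      + (Am y * ∑ p ∈ Finset.range n, w p • Am (z p)
         + (∑ p ∈ Finset.range n, w p • Am (z p)) * Am y)
      = ∑ p ∈ Finset.range n,
          w p • (R • (Am y + Am (z p)) + (Am y * Am (z p) + Am (z p) * Am y)) := by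
    simp only [Finset.mul_sum, Finset.sum_mul, mul_smul_comm, smul_mul_assoc,
      Finset.sum_smul, Finset.smul_sum, smul_add, ← Finset.sum_add_distrib]
    apply Finset.sum_congr rfl
    intro p _
    module
  rw [heq]
  exact psd_sum fun p hp => psd_smul (cross_add_psd hR y (z p) hy (hz p)) (hw p hp)

lemma sum_cross_sub_psd {R : ℝ} (hR : 0 ≤ R) {n : ℕ} (w : ℕ → ℝ) (z : ℕ → Fin d → ℝ)
    (y : Fin d → ℝ) (hw : ∀ p ∈ Finset.range n, 0 ≤ w p) (hz : ∀ p, z p ⬝ᵥ z p ≤ R)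
    (hy : y ⬝ᵥ y ≤ R) :
    (R • ((∑ p ∈ Finset.range n, w p) • Am y + ∑ p ∈ Finset.range n, w p • Am (z p))
      - (Am y * ∑ p ∈ Finset.range n, w p • Am (z p)
         + (∑ p ∈ Finset.range n, w p • Am (z p)) * Am y)).PosSemidef := by
  have heq : R • ((∑ p ∈ Finset.range n, w p) • Am y + ∑ p ∈ Finset.range n, w p • Am (z p))
      - (Am y * ∑ p ∈ Finset.range n, w p • Am (z p)
         + (∑ p ∈ Finset.range n, w p • Am (z p)) * Am y)
      = ∑ p ∈ Finset.range n,
          w p • (R • (Am y + Am (z p)) - (Am y * Am (z p) + Am (z p) * Am y)) := by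
    simp only [Finset.mul_sum, Finset.sum_mul, mul_smul_comm, smul_mul_assoc,
      Finset.sum_smul, Finset.smul_sum, smul_add, smul_sub, ← Finset.sum_add_distrib,
      ← Finset.sum_sub_distrib]
    apply Finset.sum_congr rfl
    intro p _
    module
  rw [heq]
  exact psd_sum fun p hp => psd_smul (cross_sub_psd hR y (z p) hy (hz p)) (hw p hp)

lemma sum_aka_sub_psd {R : ℝ} (hR : 0 ≤ R) {n : ℕ} (w : ℕ → ℝ) (z : ℕ → Fin d → ℝ)
    (y : Fin d → ℝ) (hw : ∀ p ∈ Finset.range n, 0 ≤ w p) (hz : ∀ p, z p ⬝ᵥ z p ≤ R)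
    (hy : y ⬝ᵥ y ≤ R) :
    ((R^2 * ∑ p ∈ Finset.range n, w p) • Am y
      - Am y * ((∑ p ∈ Finset.range n, w p • Am (z p)) * Am y)).PosSemidef := by
  have heq : (R^2 * ∑ p ∈ Finset.range n, w p) • Am y
      - Am y * ((∑ p ∈ Finset.range n, w p • Am (z p)) * Am y)
      = ∑ p ∈ Finset.range n,
          w p • ((R^2) • Am y - Am y * (Am (z p) * Am y)) := by
    simp only [Finset.mul_sum, Finset.sum_mul, mul_smul_comm, smul_mul_assoc,
      Finset.sum_smul, Finset.smul_sum, smul_sub, ← Finset.sum_sub_distrib]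
    apply Finset.sum_congr rfl
    intro p _
    module
  rw [heq]
  exact psd_sum fun p hp => psd_smul (aka_sub_psd hR y (z p) hy (hz p)) (hw p hp)

lemma sum_aka_psd {n : ℕ} (w : ℕ → ℝ) (z : ℕ → Fin d → ℝ)
    (y : Fin d → ℝ) (hw : ∀ p ∈ Finset.range n, 0 ≤ w p) :
    (Am y * ((∑ p ∈ Finset.range n, w p • Am (z p)) * Am y)).PosSemidef := by
  have heq : Am y * ((∑ p ∈ Finset.range n, w p • Am (z p)) * Am y)
      = ∑ p ∈ Finset.range n, w p • (Am y * (Am (z p) * Am y)) := by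
    simp only [Finset.mul_sum, Finset.sum_mul, mul_smul_comm, smul_mul_assoc]
  rw [heq]
  exact psd_sum fun p hp => psd_smul (aka_psd y (z p)) (hw p hp)


lemma step_id (γ b R ρ ν v Φ : ℝ) (A W S G : Mat d) (hAA : A*A = ρ•A) (hb : b = 2*γ*R) :
    (4*γ) • ((1+b)•W + b•S + v•A) - ((1 - (2*γ)•A) * G * (1 - (2*γ)•A) - 1 + (4*γ)•(S + A))
    = (1 - (2*γ)•A) * ((4*γ)•W - (G - 1 + (4*γ)•S)) * (1 - (2*γ)•A)
      + (8*γ^2) • (R•(Φ•A + W) + (A*W + W*A))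
      + (8*γ^2) • (R•(ν•A + S) - (A*S + S*A))
      + (16*γ^3) • ((R^2*Φ)•A - A*(W*A))
      + (4*γ^2*(R-ρ)) • A
      + (16*γ^3) • (A*(S*A))
      + (4*γ*v - 4*γ*b*Φ - 4*γ*b*ν - 4*γ*b^2*Φ - 2*γ*b) • A := by
  subst hb
  simp only [mul_sub, sub_mul, mul_add, add_mul, smul_mul_assoc, mul_smul_comm, one_mul,
    mul_one, mul_assoc, hAA, smul_add, smul_sub, smul_smul]
  module


lemma step_id2 (γ b R ρ ν v Φ : ℝ) (A W S G : Mat d) (hAA : A*A = ρ•A) (hb : b = 2*γ*R) :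
    (4*γ) • ((1+b)•W + b•S + v•A) + ((1 - (2*γ)•A) * G * (1 - (2*γ)•A) - 1 + (4*γ)•(S + A))
    = (1 - (2*γ)•A) * ((4*γ)•W + (G - 1 + (4*γ)•S)) * (1 - (2*γ)•A)
      + (8*γ^2) • (R•(Φ•A + W) + (A*W + W*A))
      + (8*γ^2) • (R•(ν•A + S) + (A*S + S*A))
      + (16*γ^3) • ((R^2*Φ)•A - A*(W*A))
      + (16*γ^3) • ((R^2*ν)•A - A*(S*A))
      + (4*γ^2*ρ) • A
      + (4*γ*v - 4*γ*b*Φ - 4*γ*b*ν - 4*γ*b^2*Φ - 4*γ*b^2*ν) • A := by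
  subst hb
  simp only [mul_sub, sub_mul, mul_add, add_mul, smul_mul_assoc, mul_smul_comm, one_mul,
    mul_one, mul_assoc, hAA, smul_add, smul_sub, smul_smul]
  module


noncomputable def cf (b : ℝ) (p q : ℕ) : ℝ :=
  (1 + b*p*(1+b)^(2*p+1) + b/2) * (1+b)^q - 1

variable {b : ℝ}

lemma one_le_upow (hb : 0 ≤ b) (k : ℕ) : (1:ℝ) ≤ (1+b)^k :=
  one_le_pow₀ (by linarith)

lemma upow_nonneg (hb : 0 ≤ b) (k : ℕ) : (0:ℝ) ≤ (1+b)^k :=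
  le_trans zero_le_one (one_le_upow hb k)

lemma upow_mono (hb : 0 ≤ b) {j k : ℕ} (h : j ≤ k) : (1+b)^j ≤ (1+b)^k :=
  pow_le_pow_right₀ (by linarith) h

lemma upow_le_linear (hb : 0 ≤ b) (k : ℕ) : (1+b)^k ≤ 1 + k*b*(1+b)^k := by
  induction k with
  | zero => simp
  | succ k ih =>
    have h1 : (1:ℝ) ≤ (1+b)^(k+1) := one_le_upow hb (k+1)
    have h2 : (0:ℝ) ≤ (1+b)^k := upow_nonneg hb k
    rw [pow_succ]
    push_cast
    have hk0 : (0:ℝ) ≤ (k:ℝ) := Nat.cast_nonneg k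
    nlinarith [ih, mul_nonneg (mul_nonneg (mul_nonneg hk0 hb) hb) h2,
      mul_nonneg (mul_nonneg hb hb) h2]

lemma bernoulli (hb : 0 ≤ b) (k : ℕ) : 1 + (k:ℝ)*b ≤ (1+b)^k :=
  one_add_mul_le_pow (by linarith) k

lemma upow_inv_bound (hb : 0 ≤ b) (n : ℕ) : (1+b)^n * (1 - n*b) ≤ 1 := by
  induction n with
  | zero => simp
  | succ n ih =>
    push_cast
    have hn0 : (0:ℝ) ≤ (n:ℝ) := Nat.cast_nonneg n
    rcases le_or_gt (1 - ((n:ℝ)+1)*b) 0 with h|h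
    · nlinarith [upow_nonneg hb (n+1)]
    · have key : (1+b) * (1 - ((n:ℝ)+1)*b) ≤ 1 - (n:ℝ)*b := by
        nlinarith [mul_nonneg (mul_nonneg hn0 hb) hb, mul_nonneg hb hb]
      have h2 : (0:ℝ) ≤ (1+b)^n := upow_nonneg hb n
      calc (1+b)^(n+1) * (1 - ((n:ℝ)+1)*b)
          = (1+b)^n * ((1+b) * (1 - ((n:ℝ)+1)*b)) := by ring
        _ ≤ (1+b)^n * (1 - (n:ℝ)*b) := mul_le_mul_of_nonneg_left key h2
        _ ≤ 1 := ih

lemma cf_nonneg (hb : 0 ≤ b) (p q : ℕ) : 0 ≤ cf b p q := by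
  unfold cf
  have h1 : (1:ℝ) ≤ 1 + b*p*(1+b)^(2*p+1) + b/2 := by
    have := upow_nonneg hb (2*p+1)
    have : (0:ℝ) ≤ b*p*(1+b)^(2*p+1) :=
      mul_nonneg (mul_nonneg hb (Nat.cast_nonneg p)) (upow_nonneg hb _)
    linarith
  nlinarith [one_le_upow hb q]

lemma cf_zero (n : ℕ) : cf b n 0 = b*n*(1+b)^(2*n+1) + b/2 := by
  simp [cf]; ring

lemma cf_succ (p q : ℕ) : cf b p (q+1) = (1+b) * cf b p q + b := by
  simp only [cf, pow_succ]
  ring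

lemma head_bound (hb : 0 ≤ b) (p : ℕ) (hpB : ((p:ℝ)+1)*b ≤ 1/3) :
    1 + b*p*(1+b)^(2*p+1) + b/2 ≤ (1+b)^(2*p+2) := by
  have hber := bernoulli hb (2*p+1)
  push_cast at hber
  have hq0 : (0:ℝ) ≤ (p:ℝ)*b := mul_nonneg (Nat.cast_nonneg p) hb
  have hq3 : (p:ℝ)*b ≤ 1/3 := by nlinarith
  have h1 : (0:ℝ) ≤ 1 + b - (p:ℝ)*b := by nlinarith
  have key : (1 + (2*(p:ℝ)+1)*b) * (1 + b - p*b) ≤ (1+b)^(2*p+1) * (1 + b - p*b) :=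
    mul_le_mul_of_nonneg_right hber h1
  have hpow : (1+b)^(2*p+2) = (1+b)^(2*p+1) * (1+b) := by rw [pow_succ]
  nlinarith [key]

lemma cf_le_pow (hb : 0 ≤ b) (p q : ℕ) (hpB : ((p:ℝ)+1)*b ≤ 1/3) :
    cf b p q ≤ (1+b)^(q+2*p+2) - 1 := by
  unfold cf
  have h := head_bound hb p hpB
  have h2 : (1 + b*p*(1+b)^(2*p+1) + b/2) * (1+b)^q ≤ (1+b)^(2*p+2) * (1+b)^q :=
    mul_le_mul_of_nonneg_right h (upow_nonneg hb q)
  rw [← pow_add] at h2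
  have : 2*p+2+q = q+2*p+2 := by omega
  rw [this] at h2
  linarith

lemma phi_bound (hb : 0 ≤ b) (n : ℕ) (hnB : (n:ℝ)*b ≤ 1/3) :
    ∑ p ∈ Finset.range n, cf b p (n-1-p) ≤ n * ((1+b)^(2*n) - 1) := by
  have key : ∀ p ∈ Finset.range n, cf b p (n-1-p) ≤ (1+b)^(2*n) - 1 := by
    intro p hp
    have hpn : p < n := Finset.mem_range.mp hp
    have hpB : ((p:ℝ)+1)*b ≤ 1/3 := by
      have : ((p:ℝ)+1) ≤ (n:ℝ) := by exact_mod_cast hpn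
      nlinarith
    refine (cf_le_pow hb p (n-1-p) hpB).trans ?_
    have hle : (n-1-p)+2*p+2 ≤ 2*n := by omega
    linarith [upow_mono hb hle]
  calc ∑ p ∈ Finset.range n, cf b p (n-1-p) ≤ ∑ _p ∈ Finset.range n, ((1+b)^(2*n) - 1) :=
        Finset.sum_le_sum key
    _ = n * ((1+b)^(2*n) - 1) := by simp [Finset.sum_const, nsmul_eq_mul, mul_sub]

lemma S9a (hb : 0 ≤ b) (n : ℕ) (Φ : ℝ) (hΦ : Φ ≤ n*((1+b)^(2*n)-1)) :
    b*Φ*(1+b) + b*n ≤ b*n*(1+b)^(2*n+1) := by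
  have hX : (1:ℝ) ≤ (1+b)^(2*n) := one_le_upow hb (2*n)
  have hmul : b*(1+b)*Φ ≤ b*(1+b)*(n*((1+b)^(2*n)-1)) :=
    mul_le_mul_of_nonneg_left hΦ (by nlinarith)
  have hpow : (1+b)^(2*n+1) = (1+b)^(2*n) * (1+b) := by rw [pow_succ]
  have hn0 : (0:ℝ) ≤ (n:ℝ) := Nat.cast_nonneg n
  rw [hpow]
  nlinarith [hmul, mul_nonneg (mul_nonneg hb hb) hn0]

lemma S9b (hb : 0 ≤ b) (n : ℕ) (Φ : ℝ) (hΦ : Φ ≤ n*((1+b)^(2*n)-1)) :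
    b*Φ*(1+b) + b*n*(1+b) ≤ b*n*(1+b)^(2*n+1) + b/2 := by
  have hX : (1:ℝ) ≤ (1+b)^(2*n) := one_le_upow hb (2*n)
  have hmul : b*(1+b)*Φ ≤ b*(1+b)*(n*((1+b)^(2*n)-1)) :=
    mul_le_mul_of_nonneg_left hΦ (by nlinarith)
  have hpow : (1+b)^(2*n+1) = (1+b)^(2*n) * (1+b) := by rw [pow_succ]
  have hn0 : (0:ℝ) ≤ (n:ℝ) := Nat.cast_nonneg n
  rw [hpow]
  nlinarith [hmul, mul_nonneg (mul_nonneg hb hb) hn0]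

lemma cf_final (hb : 0 ≤ b) (B : ℕ) (hD : 0 < 1 - 2*(B:ℝ)*b) (p : ℕ) (hp : p < B) :
    cf b p (B-1-p) ≤ (B:ℝ)*b/(1 - 2*(B:ℝ)*b) := by
  set k := B - 1 - p with hk
  have hkp : p + k + 1 = B := by omega
  have hkB : (k:ℝ) + (p:ℝ) = (B:ℝ) - 1 := by
    have : (k:ℕ) + p + 1 = B := by omega
    push_cast [← this]; ring
  have hB1 : 1 ≤ B := by omega
  set D := 1 - 2*(B:ℝ)*b with hDdef
  -- powers
  have hX : (1+b)^(2*B) * D ≤ 1 := by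
    have h := upow_inv_bound hb (2*B)
    have : ((2*B : ℕ) : ℝ) * b = 2*(B:ℝ)*b := by push_cast; ring
    rw [this] at h
    exact h
  have hXle : (1+b)^(2*B) ≤ 1/D := by
    rw [le_div_iff₀ hD]
    exact hX
  have hX' : (1+b)^(2*B-1) ≤ 1/D := le_trans (upow_mono hb (by omega)) hXle
  -- decomposition
  have hdec : cf b p k = (1+b/2)*((1+b)^k - 1) + b/2 + b*p*(1+b)^(2*p+1+k) := by
    unfold cf
    rw [pow_add]
    ring
  have hk1 : (1+b)^k - 1 ≤ (k:ℝ)*b*(1+b)^k := by linarith [upow_le_linear hb k]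
  have hknn : (0:ℝ) ≤ (1+b)^k - 1 := by linarith [one_le_upow hb k]
  have hb2 : 1 + b/2 ≤ 1 + b := by linarith
  have bound1 : (1+b/2)*((1+b)^k - 1) ≤ (k:ℝ)*b*(1+b)^(2*B-1) := by
    have s1 : (1+b/2)*((1+b)^k - 1) ≤ (1+b)*((k:ℝ)*b*(1+b)^k) := by
      apply mul_le_mul hb2 hk1 hknn (by linarith)
    have s2 : (1+b)*((k:ℝ)*b*(1+b)^k) = (k:ℝ)*b*(1+b)^(k+1) := by
      rw [pow_succ]; ring
    have s3 : (k:ℝ)*b*(1+b)^(k+1) ≤ (k:ℝ)*b*(1+b)^(2*B-1) := by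
      apply mul_le_mul_of_nonneg_left (upow_mono hb (by omega))
      exact mul_nonneg (Nat.cast_nonneg k) hb
    linarith
  have bound2 : b*p*(1+b)^(2*p+1+k) ≤ (p:ℝ)*b*(1+b)^(2*B-1) := by
    have : b*p*(1+b)^(2*p+1+k) ≤ b*(p:ℝ)*(1+b)^(2*B-1) := by
      apply mul_le_mul_of_nonneg_left (upow_mono hb (by omega))
      exact mul_nonneg hb (Nat.cast_nonneg p)
    linarith [this]
  have bound3 : cf b p k ≤ ((B:ℝ)-1)*b*(1+b)^(2*B-1) + b/2 := by
    rw [hdec]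
    have : ((k:ℝ) + (p:ℝ))*b*(1+b)^(2*B-1) = ((B:ℝ)-1)*b*(1+b)^(2*B-1) := by rw [hkB]
    nlinarith [bound1, bound2]
  have bound4 : ((B:ℝ)-1)*b*(1+b)^(2*B-1) ≤ ((B:ℝ)-1)*b*(1/D) := by
    apply mul_le_mul_of_nonneg_left hX'
    have : (1:ℝ) ≤ (B:ℝ) := by exact_mod_cast hB1
    exact mul_nonneg (by linarith) hb
  have bound5 : b/2 ≤ b*(1/D) := by
    have hD1 : D ≤ 1 := by
      have : (0:ℝ) ≤ 2*(B:ℝ)*b := by positivity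
      rw [hDdef]; linarith
    rw [mul_one_div, div_le_div_iff₀ two_pos hD]
    nlinarith
  have final : ((B:ℝ)-1)*b*(1/D) + b*(1/D) = (B:ℝ)*b/D := by
    field_simp
    ring
  linarith

noncomputable def Hp (γ : ℝ) (x' : ℕ → Fin d → ℝ) : ℕ → Mat d
  | 0 => 1
  | n+1 => Hp γ x' n * (1 - (2*γ) • Am (x' n))
noncomputable def Sp (x' : ℕ → Fin d → ℝ) (n : ℕ) : Mat d :=
  ∑ p ∈ Finset.range n, Am (x' p)
noncomputable def Wp (b : ℝ) (x' : ℕ → Fin d → ℝ) (n : ℕ) : Mat d :=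
  ∑ p ∈ Finset.range n, cf b p (n-1-p) • Am (x' p)
noncomputable def Fp (γ : ℝ) (x' : ℕ → Fin d → ℝ) (n : ℕ) : Mat d :=
  (Hp γ x' n)ᵀ * Hp γ x' n - 1 + (4*γ) • Sp x' n

lemma cf_succ' {b : ℝ} (p q : ℕ) : cf b p (q+1) = (1+b) * cf b p q + b := by
  simp only [cf, pow_succ]; ring

lemma cf_zero' {b : ℝ} (n : ℕ) : cf b n 0 = b*n*(1+b)^(2*n+1) + b/2 := by
  simp [cf]; ring

lemma W_succ (b : ℝ) (x' : ℕ → Fin d → ℝ) (n : ℕ) :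
    Wp b x' (n+1) = (1+b) • Wp b x' n + b • Sp x' n
      + (b*n*(1+b)^(2*n+1) + b/2) • Am (x' n) := by
  unfold Wp Sp
  rw [Finset.sum_range_succ]
  have h1 : ∀ p ∈ Finset.range n, cf b p (n+1-1-p) • Am (x' p)
      = (1+b) • (cf b p (n-1-p) • Am (x' p)) + b • Am (x' p) := by
    intro p hp
    have hpn : p < n := Finset.mem_range.mp hp
    have : n+1-1-p = (n-1-p)+1 := by omega
    rw [this, cf_succ', add_smul, smul_smul]
  rw [Finset.sum_congr rfl h1, Finset.sum_add_distrib, Finset.smul_sum, Finset.smul_sum]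
  have : n+1-1-n = 0 := by omega
  rw [this, cf_zero']


theorem main_ind (γ R : ℝ) (hγ : 0 < γ) (hR : 0 ≤ R) (B : ℕ)
    (x' : ℕ → Fin d → ℝ) (hx : ∀ p, x' p ⬝ᵥ x' p ≤ R)
    (hB : (B:ℝ)*(2*γ*R) ≤ 1/3) :
    ∀ n, n ≤ B →
      ((4*γ) • Wp (2*γ*R) x' n - Fp γ x' n).PosSemidef ∧
      ((4*γ) • Wp (2*γ*R) x' n + Fp γ x' n).PosSemidef := by
  set b := 2*γ*R with hbdef
  have hb : 0 ≤ b := by positivity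
  intro n
  induction n with
  | zero =>
    have h0 : (4*γ) • Wp b x' 0 - Fp γ x' 0 = 0 := by
      simp [Wp, Fp, Sp, Hp]
    have h0' : (4*γ) • Wp b x' 0 + Fp γ x' 0 = 0 := by
      simp [Wp, Fp, Sp, Hp]
    exact fun _ => ⟨by rw [h0]; exact Matrix.PosSemidef.zero,
      by rw [h0']; exact Matrix.PosSemidef.zero⟩
  | succ n ih =>
    intro hn1
    have hn : n ≤ B := Nat.le_of_succ_le hn1
    obtain ⟨IH1, IH2⟩ := ih hn
    have hρR : x' n ⬝ᵥ x' n ≤ R := hx n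
    have hρ0 : 0 ≤ x' n ⬝ᵥ x' n := dot_self_nonneg (x' n)
    have hAA : Am (x' n) * Am (x' n) = (x' n ⬝ᵥ x' n) • Am (x' n) := Am_mul_Am (x' n) (x' n)
    have ht : ((1 : Mat d) - (2*γ) • Am (x' n))ᵀ = (1 : Mat d) - (2*γ) • Am (x' n) := by
      simp [transpose_sub, transpose_smul, Am_transpose]
    have hM : ((1 : Mat d) - (2*γ) • Am (x' n))ᴴ = (1 : Mat d) - (2*γ) • Am (x' n) := by
      rw [conjTranspose_eq_transpose_of_trivial, ht]
    have hFsucc : Fp γ x' (n+1)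
        = (1 - (2*γ) • Am (x' n)) * ((Hp γ x' n)ᵀ * Hp γ x' n) * (1 - (2*γ) • Am (x' n)) - 1
          + (4*γ) • (Sp x' n + Am (x' n)) := by
      unfold Fp
      rw [show Hp γ x' (n+1) = Hp γ x' n * (1 - (2*γ) • Am (x' n)) from rfl]
      rw [show Sp x' (n+1) = Sp x' n + Am (x' n) from Finset.sum_range_succ _ n]
      rw [transpose_mul, ht]
      simp only [mul_assoc]
    have hWsum : Wp b x' n = ∑ p ∈ Finset.range n, cf b p (n-1-p) • Am (x' p) := rfl
    have hSsum : Sp x' n = ∑ p ∈ Finset.range n, Am (x' p) := rfl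
    have hw : ∀ p ∈ Finset.range n, 0 ≤ cf b p (n-1-p) := fun p _ => cf_nonneg hb p _
    have hone : ∑ _p ∈ Finset.range n, (1:ℝ) = (n:ℝ) := by simp
    have hΦ : ∑ p ∈ Finset.range n, cf b p (n-1-p) ≤ n * ((1+b)^(2*n) - 1) := by
      apply phi_bound hb n
      have hcast : (n:ℝ) ≤ (B:ℝ) := by exact_mod_cast hn
      nlinarith
    have hε1 : 0 ≤ 4*γ*(b*↑n*(1+b)^(2*n+1) + b/2)
        - 4*γ*b*(∑ p ∈ Finset.range n, cf b p (n-1-p))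
        - 4*γ*b*↑n - 4*γ*b^2*(∑ p ∈ Finset.range n, cf b p (n-1-p)) - 2*γ*b := by
      have h9 := S9a hb n _ hΦ
      have h' : 0 ≤ b*↑n*(1+b)^(2*n+1)
          - (b*(∑ p ∈ Finset.range n, cf b p (n-1-p))*(1+b) + b*↑n) := by linarith
      nlinarith [mul_nonneg hγ.le h']
    have hε2 : 0 ≤ 4*γ*(b*↑n*(1+b)^(2*n+1) + b/2)
        - 4*γ*b*(∑ p ∈ Finset.range n, cf b p (n-1-p))
        - 4*γ*b*↑n - 4*γ*b^2*(∑ p ∈ Finset.range n, cf b p (n-1-p)) - 4*γ*b^2*↑n := by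
      have h9 := S9b hb n _ hΦ
      have h' : 0 ≤ b*↑n*(1+b)^(2*n+1) + b/2
          - (b*(∑ p ∈ Finset.range n, cf b p (n-1-p))*(1+b) + b*↑n*(1+b)) := by linarith
      nlinarith [mul_nonneg hγ.le h']
    -- conjugated IH terms
    have hconj1 := IH1.conjTranspose_mul_mul_same (B := (1 : Mat d) - (2*γ) • Am (x' n))
    rw [hM] at hconj1
    have hconj2 := IH2.conjTranspose_mul_mul_same (B := (1 : Mat d) - (2*γ) • Am (x' n))
    rw [hM] at hconj2
    -- shared pieces
    have hP1 : ((8*γ^2) • (R • ((∑ p ∈ Finset.range n, cf b p (n-1-p)) • Am (x' n) + Wp b x' n)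
        + (Am (x' n) * Wp b x' n + Wp b x' n * Am (x' n)))).PosSemidef := by
      have h := psd_smul (sum_cross_add_psd hR (fun p => cf b p (n-1-p)) x' (x' n) hw hx hρR)
        (by positivity : (0:ℝ) ≤ 8*γ^2)
      rw [← hWsum] at h
      exact h
    have hP3 : ((16*γ^3) • ((R^2 * (∑ p ∈ Finset.range n, cf b p (n-1-p))) • Am (x' n)
        - Am (x' n) * (Wp b x' n * Am (x' n)))).PosSemidef := by
      have h := psd_smul (sum_aka_sub_psd hR (fun p => cf b p (n-1-p)) x' (x' n) hw hx hρR)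
        (by positivity : (0:ℝ) ≤ 16*γ^3)
      rw [← hWsum] at h
      exact h
    have hP6u : (((4*γ*(b*↑n*(1+b)^(2*n+1) + b/2)
        - 4*γ*b*(∑ p ∈ Finset.range n, cf b p (n-1-p))
        - 4*γ*b*↑n - 4*γ*b^2*(∑ p ∈ Finset.range n, cf b p (n-1-p)) - 2*γ*b)
          • Am (x' n))).PosSemidef := psd_smul (Am_psd (x' n)) hε1
    have hP6l : (((4*γ*(b*↑n*(1+b)^(2*n+1) + b/2)
        - 4*γ*b*(∑ p ∈ Finset.range n, cf b p (n-1-p))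
        - 4*γ*b*↑n - 4*γ*b^2*(∑ p ∈ Finset.range n, cf b p (n-1-p)) - 4*γ*b^2*↑n)
          • Am (x' n))).PosSemidef := psd_smul (Am_psd (x' n)) hε2
    have hone' : ∀ p ∈ Finset.range n, (0:ℝ) ≤ (fun _ : ℕ => (1:ℝ)) p := fun p _ => zero_le_one
    have hP2sub : ((8*γ^2) • (R • ((n:ℝ) • Am (x' n) + Sp x' n)
        - (Am (x' n) * Sp x' n + Sp x' n * Am (x' n)))).PosSemidef := by
      have h := psd_smul (sum_cross_sub_psd hR (fun _ => (1:ℝ)) x' (x' n) hone' hx hρR)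
        (by positivity : (0:ℝ) ≤ 8*γ^2)
      simp only [one_smul, hone] at h
      rw [← hSsum] at h
      exact h
    have hP2add : ((8*γ^2) • (R • ((n:ℝ) • Am (x' n) + Sp x' n)
        + (Am (x' n) * Sp x' n + Sp x' n * Am (x' n)))).PosSemidef := by
      have h := psd_smul (sum_cross_add_psd hR (fun _ => (1:ℝ)) x' (x' n) hone' hx hρR)
        (by positivity : (0:ℝ) ≤ 8*γ^2)
      simp only [one_smul, hone] at h
      rw [← hSsum] at h
      exact h
    have hP5 : ((16*γ^3) • (Am (x' n) * (Sp x' n * Am (x' n)))).PosSemidef := by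
      have h := psd_smul (sum_aka_psd (fun _ => (1:ℝ)) x' (x' n) hone')
        (by positivity : (0:ℝ) ≤ 16*γ^3)
      simp only [one_smul] at h
      rw [← hSsum] at h
      exact h
    have hP4sub : ((16*γ^3) • ((R^2 * (n:ℝ)) • Am (x' n)
        - Am (x' n) * (Sp x' n * Am (x' n)))).PosSemidef := by
      have h := psd_smul (sum_aka_sub_psd hR (fun _ => (1:ℝ)) x' (x' n) hone' hx hρR)
        (by positivity : (0:ℝ) ≤ 16*γ^3)
      simp only [one_smul, hone] at h
      rw [← hSsum] at h
      exact h
    have hrho1 : ((4*γ^2*(R - x' n ⬝ᵥ x' n)) • Am (x' n)).PosSemidef :=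
      psd_smul (Am_psd (x' n)) (mul_nonneg (by positivity) (by linarith))
    have hrho2 : ((4*γ^2*(x' n ⬝ᵥ x' n)) • Am (x' n)).PosSemidef :=
      psd_smul (Am_psd (x' n)) (mul_nonneg (by positivity) hρ0)
    constructor
    · rw [W_succ, hFsucc,
        step_id γ b R (x' n ⬝ᵥ x' n) (n:ℝ) (b*↑n*(1+b)^(2*n+1) + b/2)
          (∑ p ∈ Finset.range n, cf b p (n-1-p)) (Am (x' n)) (Wp b x' n) (Sp x' n)
          ((Hp γ x' n)ᵀ * Hp γ x' n) hAA hbdef]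
      exact ((((((hconj1.add hP1).add hP2sub).add hP3).add hrho1).add hP5).add hP6u)
    · rw [W_succ, hFsucc,
        step_id2 γ b R (x' n ⬝ᵥ x' n) (n:ℝ) (b*↑n*(1+b)^(2*n+1) + b/2)
          (∑ p ∈ Finset.range n, cf b p (n-1-p)) (Am (x' n)) (Wp b x' n) (Sp x' n)
          ((Hp γ x' n)ᵀ * Hp γ x' n) hAA hbdef]
      exact ((((((hconj2.add hP1).add hP2add).add hP3).add hP4sub).add hrho2).add hP6l)

lemma Hp_ofFn (γ : ℝ) (x' : ℕ → Fin d → ℝ) (n : ℕ) :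
    (List.ofFn fun j : Fin n => (1 : Mat d) - (2*γ) • Am (x' ↑j)).prod = Hp γ x' n := by
  induction n with
  | zero => simp [Hp]
  | succ n ih =>
    rw [List.ofFn_succ', List.prod_concat,
      show Hp γ x' (n+1) = Hp γ x' n * (1 - (2*γ) • Am (x' n)) from rfl, ← ih]
    rfl

theorem final (γ R : ℝ) (hγ : 0 < γ) (hR : 0 ≤ R) (B : ℕ)
    (x' : ℕ → Fin d → ℝ) (hx : ∀ p, x' p ⬝ᵥ x' p ≤ R)
    (hsize : γ * R * B < 1/6) :
    ((Hp γ x' B)ᵀ * Hp γ x' B -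
      (1 - (4 * γ * (1 + 2 * γ * B * R / (1 - 4 * γ * B * R))) • Sp x' B)).PosSemidef ∧
    ((1 - (4 * γ * (1 - 2 * γ * B * R / (1 - 4 * γ * B * R))) • Sp x' B) -
      (Hp γ x' B)ᵀ * Hp γ x' B).PosSemidef := by
  set b := 2*γ*R with hbdef
  have hb : 0 ≤ b := by positivity
  have hBb : (B:ℝ)*b ≥ 0 := by positivity
  have hB3 : (B:ℝ)*b ≤ 1/3 := by
    have : (B:ℝ)*b = 2*(γ*R*B) := by rw [hbdef]; ring
    linarith
  have hD : 0 < 1 - 2*(B:ℝ)*b := by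
    have : 2*(B:ℝ)*b = 4*(γ*R*B) := by rw [hbdef]; ring
    linarith
  set δ : ℝ := 2 * γ * B * R / (1 - 4 * γ * B * R) with hδdef
  have hδeq : δ = (B:ℝ)*b/(1 - 2*(B:ℝ)*b) := by
    rw [hδdef, hbdef]
    have h1 : (B:ℝ)*(2*γ*R) = 2*γ*B*R := by ring
    have h2 : 1 - 2*(B:ℝ)*(2*γ*R) = 1 - 4*γ*B*R := by ring
    rw [h1, h2]
  have hδ0 : 0 ≤ δ := by
    rw [hδeq]
    positivity
  obtain ⟨h1, h2⟩ := main_ind γ R hγ hR B x' hx hB3 B le_rfl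
  have hcf : ∀ p ∈ Finset.range B, 0 ≤ (4*γ)*(δ - cf b p (B-1-p)) := by
    intro p hp
    have := cf_final hb B hD p (Finset.mem_range.mp hp)
    rw [← hδeq] at this
    have h4γ : (0:ℝ) ≤ 4*γ := by positivity
    exact mul_nonneg h4γ (by linarith)
  have hdiff : ((4*γ*δ) • Sp x' B - (4*γ) • Wp b x' B).PosSemidef := by
    have heq : (4*γ*δ) • Sp x' B - (4*γ) • Wp b x' B
        = ∑ p ∈ Finset.range B, ((4*γ)*(δ - cf b p (B-1-p))) • Am (x' p) := by
      unfold Sp Wp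
      simp only [Finset.smul_sum, ← Finset.sum_sub_distrib]
      apply Finset.sum_congr rfl
      intro p _
      module
    rw [heq]
    exact psd_sum fun p hp => psd_smul (Am_psd (x' p)) (hcf p hp)
  constructor
  · have hg : (Hp γ x' B)ᵀ * Hp γ x' B - (1 - (4 * γ * (1 + δ)) • Sp x' B)
        = ((4*γ) • Wp b x' B + Fp γ x' B) + ((4*γ*δ) • Sp x' B - (4*γ) • Wp b x' B) := by
      unfold Fp
      module
    rw [hg]
    exact h2.add hdiff
  · have hg : (1 - (4 * γ * (1 - δ)) • Sp x' B) - (Hp γ x' B)ᵀ * Hp γ x' B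
        = ((4*γ) • Wp b x' B - Fp γ x' B) + ((4*γ*δ) • Sp x' B - (4*γ) • Wp b x' B) := by
      unfold Fp
      module
    rw [hg]
    exact h1.add hdiff

end Stmt4Aux

open Matrix in
/-- For `x₀,…,x_{B-1}` with `‖x_j‖² ≤ R` and `γRB < 1/6`, the ordered product
`H = ∏_{j}(I − 2γ x_j x_jᵀ)` satisfies
`I − 4γ(1 + 2γBR/(1−4γBR)) Σ_j x_j x_jᵀ ⪯ Hᵀ H ⪯ I − 4γ(1 − 2γBR/(1−4γBR)) Σ_j x_j x_jᵀ`. -/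
theorem stmt_4 {d B : ℕ} (R γ : ℝ) (hγ : 0 < γ) (hR : 0 ≤ R)
    (x : Fin B → (Fin d → ℝ)) (hx : ∀ j, x j ⬝ᵥ x j ≤ R)
    (hsize : γ * R * B < 1 / 6) :
    (((List.ofFn fun j : Fin B => (1 : Matrix (Fin d) (Fin d) ℝ) -
        (2 * γ) • vecMulVec (x j) (x j)).prod)ᵀ *
      ((List.ofFn fun j : Fin B => (1 : Matrix (Fin d) (Fin d) ℝ) -
        (2 * γ) • vecMulVec (x j) (x j)).prod) -
      ((1 : Matrix (Fin d) (Fin d) ℝ) -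
        (4 * γ * (1 + 2 * γ * B * R / (1 - 4 * γ * B * R))) •
          ∑ j, vecMulVec (x j) (x j))).PosSemidef ∧
    (((1 : Matrix (Fin d) (Fin d) ℝ) -
        (4 * γ * (1 - 2 * γ * B * R / (1 - 4 * γ * B * R))) •
          ∑ j, vecMulVec (x j) (x j)) -
      ((List.ofFn fun j : Fin B => (1 : Matrix (Fin d) (Fin d) ℝ) -
        (2 * γ) • vecMulVec (x j) (x j)).prod)ᵀ *
      ((List.ofFn fun j : Fin B => (1 : Matrix (Fin d) (Fin d) ℝ) -
        (2 * γ) • vecMulVec (x j) (x j)).prod)).PosSemidef := by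
  have hx' : ∀ p, (fun p => if h : p < B then x ⟨p, h⟩ else 0 : ℕ → Fin d → ℝ) p ⬝ᵥ
      (fun p => if h : p < B then x ⟨p, h⟩ else 0 : ℕ → Fin d → ℝ) p ≤ R := by
    intro p
    by_cases h : p < B
    · simp only [dif_pos h]
      exact hx ⟨p, h⟩
    · simp only [dif_neg h, zero_dotProduct]
      exact hR
  have h := Stmt4Aux.final γ R hγ hR B
    (fun p => if h : p < B then x ⟨p, h⟩ else 0) hx' hsize
  have hfun : (fun j : Fin B => (1 : Matrix (Fin d) (Fin d) ℝ) - (2 * γ) • vecMulVec (x j) (x j))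
      = fun j : Fin B => (1 : Stmt4Aux.Mat d) -
          (2 * γ) • Stmt4Aux.Am ((fun p => if h : p < B then x ⟨p, h⟩ else 0 : ℕ → Fin d → ℝ) ↑j) := by
    funext j
    simp only [Stmt4Aux.Am, dif_pos j.isLt, Fin.eta]
  have hsum : (∑ j, vecMulVec (x j) (x j))
      = Stmt4Aux.Sp (fun p => if h : p < B then x ⟨p, h⟩ else 0 : ℕ → Fin d → ℝ) B := by
    have h2 : ∀ j : Fin B, vecMulVec (x j) (x j)
        = Stmt4Aux.Am ((fun p => if h : p < B then x ⟨p, h⟩ else 0 : ℕ → Fin d → ℝ) ↑j) := by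
      intro j
      simp only [Stmt4Aux.Am, dif_pos j.isLt, Fin.eta]
    rw [Finset.sum_congr rfl (fun j _ => h2 j)]
    exact Fin.sum_univ_eq_sum_range
      (fun p => Stmt4Aux.Am ((fun p => if h : p < B then x ⟨p, h⟩ else 0 : ℕ → Fin d → ℝ) p)) B
  rw [hfun, hsum]
  rw [← Stmt4Aux.Hp_ofFn] at h
  exact h
end

section
/- Let x_0, ..., x_{B-1} ∈ R^d with ‖x_j‖^2 ≤ R for all j and γR < 1/2. Define H_{j:B-1} = ∏_{s=j}^{B-1}(I − 2γ x_s x_s^T) (with H_{B:B-1} = I) and K = Σ_{j=0}^{B-1} H_{j+1:B-1}^T x_j x_j^T H_{j+1:B-1}. Then (I − H_{0:B-1}^T H_{0:B-1})/(4γ) ⪯ K ⪯ (I − H_{0:B-1}^T H_{0:B-1})/(4γ(1−γR)). -/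
open Matrix

/-- The ordered product `f j * f (j+1) * ⋯ * f (B-1)` (identity when `j ≥ B`). -/
noncomputable def ordProdFrom {d : ℕ} (f : ℕ → Matrix (Fin d) (Fin d) ℝ) (j B : ℕ) :
    Matrix (Fin d) (Fin d) ℝ :=
  (((List.range B).drop j).map f).prod

lemma ordProdFrom_succ {d : ℕ} (f : ℕ → Matrix (Fin d) (Fin d) ℝ) {j B : ℕ} (h : j < B) :
    ordProdFrom f j B = f j * ordProdFrom f (j + 1) B := by
  unfold ordProdFrom
  rw [List.drop_eq_getElem_cons (by simpa using h)]
  simp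

lemma ordProdFrom_self {d : ℕ} (f : ℕ → Matrix (Fin d) (Fin d) ℝ) (B : ℕ) :
    ordProdFrom f B B = 1 := by
  unfold ordProdFrom
  rw [List.drop_eq_nil_of_le (by simp)]
  simp

lemma psd_smul' {d : ℕ} {M : Matrix (Fin d) (Fin d) ℝ} (hM : M.PosSemidef) {c : ℝ}
    (hc : 0 ≤ c) : (c • M).PosSemidef := by
  constructor
  · show (c • M)ᴴ = c • M
    rw [conjTranspose_smul, star_trivial, hM.1.eq]
  · intro v
    exact (Matrix.PosSemidef.smul hM hc).2 v

lemma psd_sum' {d : ℕ} (s : Finset ℕ) (f : ℕ → Matrix (Fin d) (Fin d) ℝ)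
    (h : ∀ i ∈ s, (f i).PosSemidef) : (∑ i ∈ s, f i).PosSemidef := by
  classical
  induction s using Finset.induction with
  | empty => simpa using (Matrix.PosSemidef.zero (n := Fin d) (R := ℝ))
  | insert _ _ hm ih =>
    rw [Finset.sum_insert hm]
    exact (h _ (Finset.mem_insert_self _ _)).add
      (ih fun i hi => h i (Finset.mem_insert_of_mem hi))

lemma psd_vecMulVec {d : ℕ} (x : Fin d → ℝ) : (vecMulVec x x).PosSemidef := by
  rw [vecMulVec_eq (Fin 1)]
  have : (replicateCol (Fin 1) x) = (replicateRow (Fin 1) x)ᴴ := by simp [conjTranspose_replicateRow]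
  rw [this]
  exact posSemidef_conjTranspose_mul_self _

lemma vecMulVec_mul_self {d : ℕ} (x : Fin d → ℝ) :
    vecMulVec x x * vecMulVec x x = (x ⬝ᵥ x) • vecMulVec x x := by
  ext i k
  simp only [Matrix.mul_apply, vecMulVec_apply, Matrix.smul_apply, dotProduct, smul_eq_mul,
    Finset.sum_mul]
  exact Finset.sum_congr rfl fun m _ => by ring

/-- With `H_{j:B-1} = ∏_{s=j}^{B-1}(I − 2γ x_s x_sᵀ)` and
`K = Σ_{j=0}^{B-1} H_{j+1:B-1}ᵀ x_j x_jᵀ H_{j+1:B-1}`, if `‖x_j‖² ≤ R` and `γR < 1/2`, then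
`(I − H_{0:B-1}ᵀ H_{0:B-1})/(4γ) ⪯ K ⪯ (I − H_{0:B-1}ᵀ H_{0:B-1})/(4γ(1−γR))`. -/
theorem stmt_5 {d B : ℕ} (R γ : ℝ) (hγ : 0 < γ) (hγR : γ * R < 1 / 2)
    (x : ℕ → (Fin d → ℝ)) (hx : ∀ j < B, x j ⬝ᵥ x j ≤ R) :
    let f : ℕ → Matrix (Fin d) (Fin d) ℝ :=
      fun s => 1 - (2 * γ) • vecMulVec (x s) (x s)
    let H := ordProdFrom f 0 B
    let K := ∑ j ∈ Finset.range B,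
      (ordProdFrom f (j + 1) B)ᵀ * vecMulVec (x j) (x j) * ordProdFrom f (j + 1) B
    (K - (4 * γ)⁻¹ • ((1 : Matrix (Fin d) (Fin d) ℝ) - Hᵀ * H)).PosSemidef ∧
    ((4 * γ * (1 - γ * R))⁻¹ • ((1 : Matrix (Fin d) (Fin d) ℝ) - Hᵀ * H) - K).PosSemidef := by
  intro f H K
  set X : ℕ → Matrix (Fin d) (Fin d) ℝ := fun j => vecMulVec (x j) (x j) with hXdef
  set M : ℕ → Matrix (Fin d) (Fin d) ℝ :=
    fun j => (ordProdFrom f (j + 1) B)ᵀ * X j * ordProdFrom f (j + 1) B with hMdef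
  set c : ℕ → ℝ := fun j => 4 * γ * (1 - γ * (x j ⬝ᵥ x j)) with hcdef
  have hR1 : (0:ℝ) < 1 - γ * R := by linarith
  have hxnn : ∀ j, 0 ≤ x j ⬝ᵥ x j := fun j =>
    Finset.sum_nonneg fun m _ => mul_self_nonneg _
  have hfT : ∀ j, (f j)ᵀ = f j := by
    intro j
    simp only [f, transpose_sub, transpose_one, transpose_smul]
    congr 1
    ext i k
    simp [vecMulVec_apply, mul_comm]
  have hsq : ∀ j, f j * f j = 1 - c j • X j := by
    intro j
    simp only [f, hcdef, hXdef]
    rw [sub_mul, mul_sub, mul_sub, mul_one, one_mul]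
    simp only [smul_mul_assoc, mul_smul_comm, mul_one, vecMulVec_mul_self]
    module
  have hg : ∀ j < B, (ordProdFrom f j B)ᵀ * ordProdFrom f j B
      = (ordProdFrom f (j+1) B)ᵀ * ordProdFrom f (j+1) B - c j • M j := by
    intro j hj
    rw [ordProdFrom_succ f hj, transpose_mul, hfT]
    have : (ordProdFrom f (j+1) B)ᵀ * f j * (f j * ordProdFrom f (j+1) B)
        = (ordProdFrom f (j+1) B)ᵀ * (f j * f j) * ordProdFrom f (j+1) B := by
      simp only [mul_assoc]
    rw [this, hsq j, mul_sub, sub_mul, mul_one, mul_smul_comm, smul_mul_assoc, hMdef]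
  have htel : (1 : Matrix (Fin d) (Fin d) ℝ) - Hᵀ * H = ∑ j ∈ Finset.range B, c j • M j := by
    have h1 : ∑ j ∈ Finset.range B, ((ordProdFrom f (j+1) B)ᵀ * ordProdFrom f (j+1) B
        - (ordProdFrom f j B)ᵀ * ordProdFrom f j B) = (1 : Matrix (Fin d) (Fin d) ℝ) - Hᵀ * H := by
      rw [Finset.sum_range_sub (fun j => (ordProdFrom f j B)ᵀ * ordProdFrom f j B) B]
      simp [H, ordProdFrom_self]
    rw [← h1]
    refine Finset.sum_congr rfl fun j hj => ?_
    rw [hg j (Finset.mem_range.mp hj)]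
    abel
  have hMpsd : ∀ j, (M j).PosSemidef := by
    intro j
    have := (psd_vecMulVec (x j)).conjTranspose_mul_mul_same (ordProdFrom f (j+1) B)
    simpa [hMdef, hXdef, conjTranspose_eq_transpose_of_trivial] using this
  constructor
  · have : K - (4 * γ)⁻¹ • ((1 : Matrix (Fin d) (Fin d) ℝ) - Hᵀ * H)
        = ∑ j ∈ Finset.range B, (γ * (x j ⬝ᵥ x j)) • M j := by
      rw [htel, Finset.smul_sum, hMdef, ← Finset.sum_sub_distrib]
      refine Finset.sum_congr rfl fun j hj => ?_
      rw [smul_smul]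
      have hcoef : (4 * γ)⁻¹ * c j = 1 - γ * (x j ⬝ᵥ x j) := by
        rw [hcdef]
        field_simp
      rw [hcoef]
      module
    rw [this]
    exact psd_sum' _ _ fun j hj => psd_smul' (hMpsd j) (mul_nonneg hγ.le (hxnn j))
  · have key : ∀ j < B, (4 * γ * (1 - γ * R))⁻¹ * c j - 1 ≥ 0 := by
      intro j hj
      have h4 : (0:ℝ) < 4 * γ * (1 - γ * R) := by positivity
      rw [ge_iff_le, sub_nonneg, inv_mul_eq_div, le_div_iff₀ h4, one_mul, hcdef]
      show 4 * γ * (1 - γ * R) ≤ 4 * γ * (1 - γ * (x j ⬝ᵥ x j))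
      nlinarith [hx j hj, mul_pos hγ hγ]
    have : (4 * γ * (1 - γ * R))⁻¹ • ((1 : Matrix (Fin d) (Fin d) ℝ) - Hᵀ * H) - K
        = ∑ j ∈ Finset.range B, ((4 * γ * (1 - γ * R))⁻¹ * c j - 1) • M j := by
      rw [htel, Finset.smul_sum, hMdef, ← Finset.sum_sub_distrib]
      refine Finset.sum_congr rfl fun j hj => ?_
      rw [smul_smul]
      module
    rw [this]
    exact psd_sum' _ _ fun j hj => psd_smul' (hMpsd j) (key j (Finset.mem_range.mp hj))
end

section
/- Let G and H be d×d real matrices with G symmetric positive definite and H satisfying: H + H^T ⪯ 2(I − c γ B G) + c' γ B δ I, where c, c', γ, B > 0 and δ ≥ 0 with c' δ ≤ (c/2) σ_min(G). Then the matrix Q = G^{-1} − G^{-1/2} H G^{-1/2} has σ_min(Q) ≥ c'' γ B for a constant c'' > 0 depending only on c; consequently tr(G (I − H)^{-1}) ≤ d/(c'' γ B), provided I − H is invertible. -/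
open Matrix

section

open scoped ComplexOrder

/-- The positive semidefinite square root of a positive semidefinite matrix
(the definition removed from Mathlib, restored verbatim). -/
noncomputable def Matrix.PosSemidef.sqrt {n 𝕜 : Type*} [Fintype n] [DecidableEq n] [RCLike 𝕜]
    {A : Matrix n n 𝕜} (hA : A.PosSemidef) : Matrix n n 𝕜 :=
  hA.1.eigenvectorUnitary.1 * diagonal ((↑) ∘ (√·) ∘ hA.1.eigenvalues) *
  (star hA.1.eigenvectorUnitary : Matrix n n 𝕜)

end

/-- Smallest singular value `σ_min(Q) = inf_{‖x‖=1} ‖Qx‖`. -/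
noncomputable def sMin {d : ℕ} (Q : Matrix (Fin d) (Fin d) ℝ) : ℝ :=
  ⨅ x : {x : EuclideanSpace ℝ (Fin d) // ‖x‖ = 1},
    ‖Matrix.toEuclideanCLM (𝕜 := ℝ) Q x.1‖

section helpers
variable {d : ℕ}

private lemma psd_sqrt_mul_self {A : Matrix (Fin d) (Fin d) ℝ} (hA : A.PosSemidef) :
    hA.sqrt * hA.sqrt = A := by
  have hU : (star hA.1.eigenvectorUnitary : Matrix (Fin d) (Fin d) ℝ) *
      hA.1.eigenvectorUnitary = 1 := Unitary.coe_star_mul_self _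
  conv_rhs => rw [hA.1.spectral_theorem, Unitary.conjStarAlgAut_apply]
  unfold Matrix.PosSemidef.sqrt
  calc _ = (hA.1.eigenvectorUnitary : Matrix (Fin d) (Fin d) ℝ) *
        (diagonal ((RCLike.ofReal : ℝ → ℝ) ∘ (√·) ∘ hA.1.eigenvalues) *
          ((star hA.1.eigenvectorUnitary : Matrix (Fin d) (Fin d) ℝ) * (hA.1.eigenvectorUnitary : Matrix (Fin d) (Fin d) ℝ)) *
          diagonal ((RCLike.ofReal : ℝ → ℝ) ∘ (√·) ∘ hA.1.eigenvalues)) *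
        (star hA.1.eigenvectorUnitary : Matrix (Fin d) (Fin d) ℝ) := by
        simp only [Matrix.mul_assoc]
    _ = _ := by
      rw [hU, Matrix.mul_one, diagonal_mul_diagonal]
      congr 3
      funext i
      simp [Real.mul_self_sqrt (hA.eigenvalues_nonneg i)]

private lemma psd_sqrt_isHermitian {A : Matrix (Fin d) (Fin d) ℝ} (hA : A.PosSemidef) :
    hA.sqrt.IsHermitian := by
  unfold Matrix.PosSemidef.sqrt
  exact Matrix.isHermitian_mul_mul_conjTranspose _ (Matrix.isHermitian_diagonal _)

private lemma aux1 (A : Matrix (Fin d) (Fin d) ℝ) (v w : Fin d → ℝ) :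
    v ⬝ᵥ (A *ᵥ w) = (Aᵀ *ᵥ v) ⬝ᵥ w := by
  rw [Matrix.dotProduct_mulVec, Matrix.mulVec_transpose]

private lemma inner_E (v w : Fin d → ℝ) :
    (inner ℝ ((WithLp.equiv 2 (Fin d → ℝ)).symm v) ((WithLp.equiv 2 (Fin d → ℝ)).symm w) : ℝ)
      = v ⬝ᵥ w := by
  simp [PiLp.inner_apply, dotProduct, mul_comm]

private lemma norm_E_sq (v : Fin d → ℝ) :
    ‖(WithLp.equiv 2 (Fin d → ℝ)).symm v‖ ^ 2 = v ⬝ᵥ v := by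
  rw [← inner_E v v, real_inner_self_eq_norm_sq]

private lemma clm_E (Q : Matrix (Fin d) (Fin d) ℝ) (v : Fin d → ℝ) :
    Matrix.toEuclideanCLM (𝕜 := ℝ) Q ((WithLp.equiv 2 (Fin d → ℝ)).symm v)
      = (WithLp.equiv 2 (Fin d → ℝ)).symm (Q *ᵥ v) := by
  simp [Matrix.toEuclideanCLM_toLp]

private lemma sphere_nonempty (hd : 0 < d) :
    Nonempty {x : EuclideanSpace ℝ (Fin d) // ‖x‖ = 1} :=
  ⟨⟨EuclideanSpace.single (⟨0, hd⟩ : Fin d) (1 : ℝ), by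
      simp [EuclideanSpace.norm_single]⟩⟩

/-- `sMin Q * ‖x‖ ≤ ‖Q x‖` for every vector. -/
private lemma sMin_le (Q : Matrix (Fin d) (Fin d) ℝ) (x : EuclideanSpace ℝ (Fin d)) :
    sMin Q * ‖x‖ ≤ ‖Matrix.toEuclideanCLM (𝕜 := ℝ) Q x‖ := by
  rcases eq_or_ne x 0 with rfl | hx
  · simp
  · have hnx : (0:ℝ) < ‖x‖ := norm_pos_iff.mpr hx
    set u : EuclideanSpace ℝ (Fin d) := ‖x‖⁻¹ • x with hu
    have hun : ‖u‖ = 1 := norm_smul_inv_norm hx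
    have hb : BddBelow (Set.range fun y : {x : EuclideanSpace ℝ (Fin d) // ‖x‖ = 1} =>
        ‖Matrix.toEuclideanCLM (𝕜 := ℝ) Q y.1‖) := by
      refine ⟨0, ?_⟩
      rintro y ⟨z, rfl⟩
      exact norm_nonneg _
    have h1 : sMin Q ≤ ‖Matrix.toEuclideanCLM (𝕜 := ℝ) Q u‖ :=
      ciInf_le hb (⟨u, hun⟩ : {x : EuclideanSpace ℝ (Fin d) // ‖x‖ = 1})
    have h2 : ‖Matrix.toEuclideanCLM (𝕜 := ℝ) Q u‖
        = ‖x‖⁻¹ * ‖Matrix.toEuclideanCLM (𝕜 := ℝ) Q x‖ := by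
      rw [hu, _root_.map_smul, norm_smul, norm_inv, norm_norm]
    rw [h2] at h1
    calc sMin Q * ‖x‖ ≤ (‖x‖⁻¹ * ‖Matrix.toEuclideanCLM (𝕜 := ℝ) Q x‖) * ‖x‖ :=
          mul_le_mul_of_nonneg_right h1 hnx.le
      _ = ‖Matrix.toEuclideanCLM (𝕜 := ℝ) Q x‖ := by field_simp

private lemma sMin_nonneg (hd : 0 < d) (Q : Matrix (Fin d) (Fin d) ℝ) : 0 ≤ sMin Q := by
  haveI := sphere_nonempty hd
  exact le_ciInf fun x => norm_nonneg _

private lemma dot_self_nonneg (v : Fin d → ℝ) : 0 ≤ v ⬝ᵥ v :=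
  Finset.sum_nonneg fun i _ => mul_self_nonneg _

/-- Key lemma: coercivity of the quadratic form gives both conclusions. -/
private lemma key (hd : 0 < d) (Q : Matrix (Fin d) (Fin d) ℝ) (k : ℝ) (hk : 0 < k)
    (hQ : ∀ v : Fin d → ℝ, k * (v ⬝ᵥ v) ≤ v ⬝ᵥ (Q *ᵥ v)) :
    k ≤ sMin Q ∧ (IsUnit Q → Q⁻¹.trace ≤ (d : ℝ) / k) := by
  constructor
  · haveI := sphere_nonempty hd
    refine le_ciInf fun x => ?_
    obtain ⟨x, hx⟩ := x
    set v : Fin d → ℝ := WithLp.equiv 2 (Fin d → ℝ) x with hv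
    have hxv : (WithLp.equiv 2 (Fin d → ℝ)).symm v = x := by simp [hv]
    have hvv : v ⬝ᵥ v = 1 := by
      rw [← norm_E_sq v, hxv, hx]; norm_num
    have hcs : v ⬝ᵥ (Q *ᵥ v) ≤ ‖Matrix.toEuclideanCLM (𝕜 := ℝ) Q x‖ := by
      have := real_inner_le_norm x (Matrix.toEuclideanCLM (𝕜 := ℝ) Q x)
      rw [hx, one_mul] at this
      calc v ⬝ᵥ (Q *ᵥ v)
          = (inner ℝ ((WithLp.equiv 2 (Fin d → ℝ)).symm v)
              ((WithLp.equiv 2 (Fin d → ℝ)).symm (Q *ᵥ v)) : ℝ) := (inner_E _ _).symm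
        _ = (inner ℝ x (Matrix.toEuclideanCLM (𝕜 := ℝ) Q x) : ℝ) := by rw [← clm_E, hxv]
        _ ≤ ‖Matrix.toEuclideanCLM (𝕜 := ℝ) Q x‖ := this
    have := hQ v
    rw [hvv, mul_one] at this
    linarith
  · intro hQu
    have hdet : IsUnit Q.det := (Matrix.isUnit_iff_isUnit_det Q).mp hQu
    have hQinv : Q * Q⁻¹ = 1 := Matrix.mul_nonsing_inv Q hdet
    have hdiag : ∀ i : Fin d, Q⁻¹ i i ≤ 1 / k := by
      intro i
      set e : Fin d → ℝ := Pi.single i 1 with he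
      set y : Fin d → ℝ := Q⁻¹ *ᵥ e with hy
      have hQy : Q *ᵥ y = e := by
        rw [hy, Matrix.mulVec_mulVec, hQinv, Matrix.one_mulVec]
      have hyi : y i = Q⁻¹ i i := by
        simp [hy, he, Matrix.mulVec, dotProduct, Pi.single_apply]
      have h1 : k * (y ⬝ᵥ y) ≤ y i := by
        have := hQ y
        rw [hQy] at this
        simpa [he, dotProduct_single] using this
      have h2 : (y i) ^ 2 ≤ y ⬝ᵥ y := by
        have : y i * y i ≤ ∑ j, y j * y j :=
          Finset.single_le_sum (fun j _ => mul_self_nonneg (y j)) (Finset.mem_univ i)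
        simpa [dotProduct, sq] using this
      have hy0 : 0 ≤ y i := le_trans (mul_nonneg hk.le (dot_self_nonneg y)) h1
      rw [← hyi]
      rcases eq_or_lt_of_le hy0 with h | h
      · rw [← h]; positivity
      · rw [le_div_iff₀ hk]
        nlinarith
    have : Q⁻¹.trace = ∑ i, Q⁻¹ i i := rfl
    rw [this]
    calc (∑ i, Q⁻¹ i i) ≤ ∑ _i : Fin d, 1 / k :=
          Finset.sum_le_sum fun i _ => hdiag i
      _ = (d : ℝ) / k := by simp; ring

end helpers

/-- If `H + Hᵀ ⪯ 2(I − cγB G) + c'γBδ I` with `c'δ ≤ (c/2)σ_min(G)`, then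
`Q = G⁻¹ − G^{-1/2} H G^{-1/2}` has `σ_min(Q) ≥ c''γB` for a constant `c'' > 0` depending
only on `c`; consequently `tr(G(I−H)⁻¹) ≤ d/(c''γB)` provided `I − H` is invertible. -/
theorem stmt_17 (c : ℝ) (hc : 0 < c) :
    ∃ c'' : ℝ, 0 < c'' ∧
      ∀ (d : ℕ), 0 < d →
      ∀ (G H : Matrix (Fin d) (Fin d) ℝ) (hG : G.PosDef),
      ∀ c' γ B δ : ℝ, 0 < c' → 0 < γ → 0 < B → 0 ≤ δ →
      (((2 : ℝ) • ((1 : Matrix (Fin d) (Fin d) ℝ) - (c * γ * B) • G) +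
          (c' * γ * B * δ) • (1 : Matrix (Fin d) (Fin d) ℝ)) - (H + Hᵀ)).PosSemidef →
      c' * δ ≤ (c / 2) * sMin G →
      sMin (G⁻¹ - hG.posSemidef.sqrt⁻¹ * H * hG.posSemidef.sqrt⁻¹) ≥ c'' * γ * B ∧
      (IsUnit ((1 : Matrix (Fin d) (Fin d) ℝ) - H) →
        (G * ((1 : Matrix (Fin d) (Fin d) ℝ) - H)⁻¹).trace ≤ (d : ℝ) / (c'' * γ * B)) := by
  refine ⟨c / 2, by linarith, ?_⟩
  intro d hd G H hG c' γ B δ hc' hγ hB hδ hPSD hsm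
  set S : Matrix (Fin d) (Fin d) ℝ := hG.posSemidef.sqrt with hSdef
  have hSS : S * S = G := psd_sqrt_mul_self hG.posSemidef
  have hSherm : S.IsHermitian := psd_sqrt_isHermitian hG.posSemidef
  have hSsym : Sᵀ = S := hSherm
  have hdetS : IsUnit S.det := by
    have hdetG : IsUnit G.det := isUnit_iff_ne_zero.mpr hG.det_pos.ne'
    have : S.det * S.det = G.det := by rw [← Matrix.det_mul, hSS]
    refine isUnit_iff_ne_zero.mpr fun h => ?_
    rw [h, mul_zero] at this
    exact (isUnit_iff_ne_zero.mp hdetG) this.symm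
  have hS1 : S * S⁻¹ = 1 := Matrix.mul_nonsing_inv S hdetS
  have hS1' : S⁻¹ * S = 1 := Matrix.nonsing_inv_mul S hdetS
  have hSinvT : (S⁻¹)ᵀ = S⁻¹ := by rw [Matrix.transpose_nonsing_inv, hSsym]
  have hGinv : G⁻¹ = S⁻¹ * S⁻¹ := by rw [← hSS, Matrix.mul_inv_rev]
  set Q : Matrix (Fin d) (Fin d) ℝ := G⁻¹ - S⁻¹ * H * S⁻¹ with hQdef
  set k : ℝ := c / 2 * γ * B with hkdef
  have hk : 0 < k := by positivity
  -- coercivity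
  have hco : ∀ v : Fin d → ℝ, k * (v ⬝ᵥ v) ≤ v ⬝ᵥ (Q *ᵥ v) := by
    intro v
    set y : Fin d → ℝ := S⁻¹ *ᵥ v with hy
    set g : ℝ := v ⬝ᵥ (G⁻¹ *ᵥ v) with hg
    have hyy : y ⬝ᵥ y = g := by
      rw [hg, hGinv, ← Matrix.mulVec_mulVec, aux1 S⁻¹ v (S⁻¹ *ᵥ v), hSinvT]
    have hGy : y ⬝ᵥ (G *ᵥ y) = v ⬝ᵥ v := by
      have h1 : G *ᵥ y = S *ᵥ v := by
        rw [hy, Matrix.mulVec_mulVec, ← hSS, Matrix.mul_assoc, hS1, Matrix.mul_one]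
      rw [h1, hy, dotProduct_comm, aux1 S⁻¹ (S *ᵥ v) v, hSinvT,
        Matrix.mulVec_mulVec, hS1', Matrix.one_mulVec]
    have hHQ : v ⬝ᵥ (Q *ᵥ v) = g - y ⬝ᵥ (H *ᵥ y) := by
      rw [hQdef, Matrix.sub_mulVec, dotProduct_sub, ← hg]
      congr 1
      rw [← Matrix.mulVec_mulVec, ← Matrix.mulVec_mulVec, aux1 S⁻¹ v _, hSinvT, hy]
    have hT : y ⬝ᵥ (Hᵀ *ᵥ y) = y ⬝ᵥ (H *ᵥ y) := by
      rw [aux1 Hᵀ y y, Matrix.transpose_transpose, dotProduct_comm]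
    have h0 := hPSD.dotProduct_mulVec_nonneg y
    have hstar : star y = y := rfl
    rw [hstar] at h0
    have hexp : y ⬝ᵥ ((((2 : ℝ) • ((1 : Matrix (Fin d) (Fin d) ℝ) - (c * γ * B) • G) +
          (c' * γ * B * δ) • (1 : Matrix (Fin d) (Fin d) ℝ)) - (H + Hᵀ)) *ᵥ y)
        = 2 * (y ⬝ᵥ y) - 2 * (c * γ * B) * (y ⬝ᵥ (G *ᵥ y))
          + (c' * γ * B * δ) * (y ⬝ᵥ y) - y ⬝ᵥ (H *ᵥ y) - y ⬝ᵥ (Hᵀ *ᵥ y) := by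
      simp [Matrix.sub_mulVec, Matrix.add_mulVec, Matrix.smul_mulVec,
        Matrix.one_mulVec, dotProduct_sub, dotProduct_add, dotProduct_smul,
        smul_eq_mul, smul_sub, Matrix.mulVec_smul]
      ring
    rw [hexp, hT, hyy, hGy] at h0
    -- h0 : 0 ≤ 2g − 2a(v⬝ᵥv) + b g − 2 yHy
    have hg0 : 0 ≤ g := by rw [← hyy]; exact dot_self_nonneg y
    have hL : sMin G * g ≤ v ⬝ᵥ v := by
      set z : Fin d → ℝ := G⁻¹ *ᵥ v with hz
      have hvz : G *ᵥ z = v := by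
        rw [hz, Matrix.mulVec_mulVec, Matrix.mul_nonsing_inv G
          (isUnit_iff_ne_zero.mpr hG.det_pos.ne'), Matrix.one_mulVec]
      set xE := (WithLp.equiv 2 (Fin d → ℝ)).symm v with hxE
      set zE := (WithLp.equiv 2 (Fin d → ℝ)).symm z with hzE
      have h1 : g ≤ ‖xE‖ * ‖zE‖ := by
        calc g = (inner ℝ xE zE : ℝ) := (inner_E v z).symm
          _ ≤ ‖xE‖ * ‖zE‖ := real_inner_le_norm _ _
      have h2 : sMin G * ‖zE‖ ≤ ‖xE‖ := by
        have := sMin_le G zE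
        rwa [hzE, clm_E, hvz, ← hxE] at this
      have hsmnn : 0 ≤ sMin G := sMin_nonneg hd G
      nlinarith [norm_nonneg xE, norm_nonneg zE,
        mul_le_mul_of_nonneg_left h1 hsmnn,
        mul_le_mul_of_nonneg_right h2 (norm_nonneg xE),
        sq_nonneg (‖xE‖), norm_E_sq v]
    have hvv0 : 0 ≤ v ⬝ᵥ v := dot_self_nonneg v
    -- c'δ g ≤ (c/2) (v⬝ᵥv)
    have hcd : c' * δ * g ≤ c / 2 * (v ⬝ᵥ v) := by
      have h1 : c' * δ * g ≤ (c / 2 * sMin G) * g := mul_le_mul_of_nonneg_right hsm hg0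
      have h2 : c / 2 * (sMin G * g) ≤ c / 2 * (v ⬝ᵥ v) :=
        mul_le_mul_of_nonneg_left hL (by linarith)
      nlinarith
    rw [hHQ]
    have hγB : 0 < γ * B := mul_pos hγ hB
    nlinarith [mul_le_mul_of_nonneg_left hcd hγB.le]
  obtain ⟨hsmin, htr⟩ := key hd Q k hk hco
  refine ⟨hsmin, fun hunit => ?_⟩
  -- Q = S⁻¹ * (1 - H) * S⁻¹
  have hQfact : Q = S⁻¹ * ((1 : Matrix (Fin d) (Fin d) ℝ) - H) * S⁻¹ := by
    rw [hQdef, hGinv]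
    noncomm_ring
  have hQu : IsUnit Q := by
    rw [hQfact]
    have hSu : IsUnit S⁻¹ := Matrix.isUnit_nonsing_inv_iff.mpr
      ((Matrix.isUnit_iff_isUnit_det S).mpr hdetS)
    exact (hSu.mul hunit).mul hSu
  have hQinv : Q⁻¹ = S * ((1 : Matrix (Fin d) (Fin d) ℝ) - H)⁻¹ * S := by
    rw [hQfact, Matrix.mul_inv_rev, Matrix.mul_inv_rev,
      Matrix.nonsing_inv_nonsing_inv S hdetS]
    simp only [Matrix.mul_assoc]
  have htrace : Q⁻¹.trace = (G * ((1 : Matrix (Fin d) (Fin d) ℝ) - H)⁻¹).trace := by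
    rw [hQinv]
    rw [Matrix.trace_mul_cycle, hSS]
  have := htr hQu
  rw [htrace] at this
  exact this
end
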